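/- arXiv:2407.11411 — 3 statements merged into one kernel-verified Lean document; each statement's English description precedes it below -/
import Mathlib

section
/- Let r, s ≥ 3 be integers, both odd. If the pair (Γ₂(r,s), G₂(r,s)) is basic of cycle type, then r and s are both odd primes. -/
open SimpleGraph

namespace OG4

variable {V : Type*} {W : Type*}

/-! ### Normal quotients, cycles, and basic pairs -/

/-- The setoid of orbits of a group `N` of permutations of `V`. -/
def orbitSetoid (N : Subgroup (Equiv.Perm V)) : Setoid V := MulAction.orbitRel N V

/-- The (normal) quotient graph of a graph `Γ` with respect to a group `N` of permutations:
its vertices are the `N`-orbits, two distinct orbits being adjacent iff some vertex of one is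
adjacent in `Γ` to some vertex of the other. -/
def quotientGraph (Γ : SimpleGraph V) (N : Subgroup (Equiv.Perm V)) :
    SimpleGraph (Quotient (orbitSetoid N)) :=
  SimpleGraph.fromRel fun a b =>
    ∃ x y : V, Quotient.mk (orbitSetoid N) x = a ∧ Quotient.mk (orbitSetoid N) y = b ∧ Γ.Adj x y

/-- `N` is a normal subgroup of the subgroup `G` (of some ambient group). -/
def NormalIn {G : Type*} [Group G] (N H : Subgroup G) : Prop :=
  N ≤ H ∧ ∀ h ∈ H, ∀ n ∈ N, h * n * h⁻¹ ∈ N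

/-- A graph is isomorphic to a cycle graph `C_m` for some `m ≥ 3`. -/
def IsoCycle (Δ : SimpleGraph W) : Prop :=
  ∃ m : ℕ, 3 ≤ m ∧ Nonempty (Δ ≃g SimpleGraph.cycleGraph m)

/-- Every normal quotient of `(Γ, G)` relative to a nontrivial normal subgroup is degenerate:
it has at most 2 vertices or is a cycle. -/
def IsBasic (Γ : SimpleGraph V) (G : Subgroup (Equiv.Perm V)) : Prop :=
  ∀ N : Subgroup (Equiv.Perm V), NormalIn N G → N ≠ ⊥ →
    Nat.card (Quotient (orbitSetoid N)) ≤ 2 ∨ IsoCycle (quotientGraph Γ N)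

/-- `(Γ, G)` is basic of cycle type. -/
def BasicOfCycleType (Γ : SimpleGraph V) (G : Subgroup (Equiv.Perm V)) : Prop :=
  IsBasic Γ G ∧
    ∃ N : Subgroup (Equiv.Perm V), NormalIn N G ∧ N ≠ ⊥ ∧ IsoCycle (quotientGraph Γ N)

/-- The kernel of the action of `G` on the set of `N`-orbits. -/
def orbitKernel (G N : Subgroup (Equiv.Perm V)) : Subgroup (Equiv.Perm V) where
  carrier := {g | g ∈ G ∧ ∀ x : V,
    Quotient.mk (orbitSetoid N) (g x) = Quotient.mk (orbitSetoid N) x}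
  one_mem' := ⟨G.one_mem, fun x => by simp⟩
  mul_mem' := by
    rintro a b ⟨haG, ha⟩ ⟨hbG, hb⟩
    refine ⟨G.mul_mem haG hbG, fun x => ?_⟩
    rw [Equiv.Perm.mul_apply, ha (b x), hb x]
  inv_mem' := by
    rintro a ⟨haG, ha⟩
    refine ⟨G.inv_mem haG, fun x => ?_⟩
    have h := ha (a⁻¹ x)
    rw [show a (a⁻¹ x) = x from a.apply_symm_apply x] at h
    exact h.symm

/-- `(Γ, G)` has a pair of independent cyclic normal quotients. -/
def HasIndepCyclicQuotients (Γ : SimpleGraph V) (G : Subgroup (Equiv.Perm V)) : Prop :=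
  ∃ N M : Subgroup (Equiv.Perm V), NormalIn N G ∧ NormalIn M G ∧
    IsoCycle (quotientGraph Γ N) ∧ IsoCycle (quotientGraph Γ M) ∧
    ¬ IsoCycle (quotientGraph Γ (orbitKernel G N ⊓ orbitKernel G M))

/-- `(Γ, G)` is basic of independent-cycle type. -/
def BasicOfIndependentCycleType (Γ : SimpleGraph V) (G : Subgroup (Equiv.Perm V)) : Prop :=
  IsBasic Γ G ∧ HasIndepCyclicQuotients Γ G

/-- Isomorphism of graph-group pairs: a graph isomorphism conjugating one group onto the other. -/
def PairIso (Γ : SimpleGraph V) (G : Subgroup (Equiv.Perm V))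
    (Δ : SimpleGraph W) (H : Subgroup (Equiv.Perm W)) : Prop :=
  ∃ e : Γ ≃g Δ, ∀ h : Equiv.Perm W, h ∈ H ↔ ∃ g ∈ G, e.toEquiv.permCongr g = h

/-! ### Minimal normal subgroups -/

/-- `M` is a minimal normal subgroup of the ambient group. -/
def IsMinimalNormal {G : Type*} [Group G] (M : Subgroup G) : Prop :=
  M.Normal ∧ M ≠ ⊥ ∧ ∀ N : Subgroup G, N.Normal → N ≤ M → N = ⊥ ∨ N = M

/-- `M` is a minimal normal subgroup of the subgroup `H`. -/
def IsMinimalNormalIn {G : Type*} [Group G] (M H : Subgroup G) : Prop :=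
  NormalIn M H ∧ M ≠ ⊥ ∧ ∀ N : Subgroup G, NormalIn N H → N ≤ M → N = ⊥ ∨ N = M

/-! ### The graphs `Γ(r,s)` and their automorphisms -/

/-- In `Γ(r,s)`, the vertex `(i,j)` is joined to the four vertices `(i ± 1, j ± 1)`. -/
def gammaRel (r s : ℕ) (x y : ZMod r × ZMod s) : Prop :=
  (y.1 = x.1 + 1 ∨ y.1 = x.1 - 1) ∧ (y.2 = x.2 + 1 ∨ y.2 = x.2 - 1)

/-- The graph `Γ(r,s)` on `ℤ_r × ℤ_s`. -/
def Gamma (r s : ℕ) : SimpleGraph (ZMod r × ZMod s) := SimpleGraph.fromRel (gammaRel r s)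

/-- `μ : (i,j) ↦ (i+1, j)`. -/
def mu (r s : ℕ) : Equiv.Perm (ZMod r × ZMod s) :=
  (Equiv.addRight (1 : ZMod r)).prodCongr (Equiv.refl (ZMod s))

/-- `ν : (i,j) ↦ (i, j+1)`. -/
def nu (r s : ℕ) : Equiv.Perm (ZMod r × ZMod s) :=
  (Equiv.refl (ZMod r)).prodCongr (Equiv.addRight (1 : ZMod s))

/-- `σ : (i,j) ↦ (-i, j)`. -/
def sigma (r s : ℕ) : Equiv.Perm (ZMod r × ZMod s) :=
  (Equiv.neg (ZMod r)).prodCongr (Equiv.refl (ZMod s))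

/-- `τ : (i,j) ↦ (-i, -j)`. -/
def tau (r s : ℕ) : Equiv.Perm (ZMod r × ZMod s) :=
  (Equiv.neg (ZMod r)).prodCongr (Equiv.neg (ZMod s))

/-- `σν : (i,j) ↦ (-i, j+1)`. -/
def sigmaNu (r s : ℕ) : Equiv.Perm (ZMod r × ZMod s) :=
  (Equiv.neg (ZMod r)).prodCongr (Equiv.addRight (1 : ZMod s))

/-- `μν : (i,j) ↦ (i+1, j+1)`. -/
def muNu (r s : ℕ) : Equiv.Perm (ZMod r × ZMod s) :=
  (Equiv.addRight (1 : ZMod r)).prodCongr (Equiv.addRight (1 : ZMod s))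

/-- `σμν : (i,j) ↦ (-(i+1), j+1)`. -/
def sigmaMuNu (r s : ℕ) : Equiv.Perm (ZMod r × ZMod s) :=
  ((Equiv.addRight (1 : ZMod r)).trans (Equiv.neg (ZMod r))).prodCongr
    (Equiv.addRight (1 : ZMod s))

/-- `μ² : (i,j) ↦ (i+2, j)`. -/
def muSq (r s : ℕ) : Equiv.Perm (ZMod r × ZMod s) :=
  (Equiv.addRight (2 : ZMod r)).prodCongr (Equiv.refl (ZMod s))

/-- `ν² : (i,j) ↦ (i, j+2)`. -/
def nuSq (r s : ℕ) : Equiv.Perm (ZMod r × ZMod s) :=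
  (Equiv.refl (ZMod r)).prodCongr (Equiv.addRight (2 : ZMod s))

/-- `μ^k : (i,j) ↦ (i+k, j)`. -/
def muPow (r s k : ℕ) : Equiv.Perm (ZMod r × ZMod s) :=
  (Equiv.addRight ((k : ZMod r))).prodCongr (Equiv.refl (ZMod s))

/-- `μ^k ν² : (i,j) ↦ (i+k, j+2)`. -/
def muPowNuSq (r s k : ℕ) : Equiv.Perm (ZMod r × ZMod s) :=
  (Equiv.addRight ((k : ZMod r))).prodCongr (Equiv.addRight (2 : ZMod s))

/-- `G(r,s) = ⟨μ, ν, σ⟩`. -/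
def Ggroup (r s : ℕ) : Subgroup (Equiv.Perm (ZMod r × ZMod s)) :=
  Subgroup.closure {mu r s, nu r s, sigma r s}

/-- `H(r,s) = ⟨μ, σν, τ⟩`. -/
def Hgroup (r s : ℕ) : Subgroup (Equiv.Perm (ZMod r × ZMod s)) :=
  Subgroup.closure {mu r s, sigmaNu r s, tau r s}

/-! ### The graphs `Γ⁺(r,s)` (for `r`, `s` even) -/

/-- `X⁺`: the set of `(i,j)` with `i` and `j` of the same parity. -/
def XPlus (r s : ℕ) : Set (ZMod r × ZMod s) := {x | x.1.val % 2 = x.2.val % 2}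

/-- `Γ⁺(r,s)`, the subgraph of `Γ(r,s)` induced on `X⁺`. -/
def GammaPlus (r s : ℕ) : SimpleGraph (XPlus r s) :=
  SimpleGraph.induce (XPlus r s) (Gamma r s)

section parity

lemma val_add_one_mod_two (r : ℕ) (hr : 2 ∣ r) (hr0 : r ≠ 0) (i : ZMod r) :
    (i + 1).val % 2 = (i.val + 1) % 2 := by
  haveI : NeZero r := ⟨hr0⟩
  haveI : Fact (1 < r) := ⟨by have := Nat.le_of_dvd (Nat.pos_of_ne_zero hr0) hr; omega⟩
  rw [ZMod.val_add, Nat.mod_mod_of_dvd _ hr, ZMod.val_one]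

lemma val_add_two_mod_two (r : ℕ) (hr : 2 ∣ r) (hr0 : r ≠ 0) (i : ZMod r) :
    (i + 2).val % 2 = i.val % 2 := by
  have h1 := val_add_one_mod_two r hr hr0 i
  have h2 := val_add_one_mod_two r hr hr0 (i + 1)
  rw [show i + 1 + 1 = i + 2 by ring] at h2
  omega

lemma val_neg_mod_two (r : ℕ) (hr : 2 ∣ r) (hr0 : r ≠ 0) (i : ZMod r) :
    (-i).val % 2 = i.val % 2 := by
  haveI : NeZero r := ⟨hr0⟩
  rcases eq_or_ne i 0 with h | h
  · simp [h]
  · have h1 : (-i).val = r - i.val := by rw [ZMod.neg_val]; simp [h]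
    have h2 : i.val < r := ZMod.val_lt i
    have h3 : i.val ≠ 0 := fun hh => h ((ZMod.val_eq_zero i).mp hh)
    obtain ⟨t, rfl⟩ := hr
    rw [h1]
    omega

end parity

section plusPerms

variable (r s : ℕ)

/-- The restriction of `μ²` to `X⁺`. -/
def muSqP (hr : 2 ∣ r) (hr0 : r ≠ 0) : Equiv.Perm (XPlus r s) :=
  (muSq r s).subtypePerm (by
    intro x
    have h := val_add_two_mod_two r hr hr0 x.1
    simp only [XPlus, Set.mem_setOf_eq, muSq, Equiv.prodCongr_apply, Prod.map,
      Equiv.coe_addRight, Equiv.refl_apply]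
    omega)

/-- The restriction of `ν²` to `X⁺`. -/
def nuSqP (hs : 2 ∣ s) (hs0 : s ≠ 0) : Equiv.Perm (XPlus r s) :=
  (nuSq r s).subtypePerm (by
    intro x
    have h := val_add_two_mod_two s hs hs0 x.2
    simp only [XPlus, Set.mem_setOf_eq, nuSq, Equiv.prodCongr_apply, Prod.map,
      Equiv.coe_addRight, Equiv.refl_apply]
    omega)

/-- The restriction of `μν` to `X⁺`. -/
def muNuP (hr : 2 ∣ r) (hr0 : r ≠ 0) (hs : 2 ∣ s) (hs0 : s ≠ 0) : Equiv.Perm (XPlus r s) :=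
  (muNu r s).subtypePerm (by
    intro x
    have h1 := val_add_one_mod_two r hr hr0 x.1
    have h2 := val_add_one_mod_two s hs hs0 x.2
    simp only [XPlus, Set.mem_setOf_eq, muNu, Equiv.prodCongr_apply, Prod.map,
      Equiv.coe_addRight]
    omega)

/-- The restriction of `σ` to `X⁺`. -/
def sigmaP (hr : 2 ∣ r) (hr0 : r ≠ 0) : Equiv.Perm (XPlus r s) :=
  (sigma r s).subtypePerm (by
    intro x
    have h := val_neg_mod_two r hr hr0 x.1
    simp only [XPlus, Set.mem_setOf_eq, sigma, Equiv.prodCongr_apply, Prod.map,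
      Equiv.neg_apply, Equiv.refl_apply]
    omega)

/-- The restriction of `τ` to `X⁺`. -/
def tauP (hr : 2 ∣ r) (hr0 : r ≠ 0) (hs : 2 ∣ s) (hs0 : s ≠ 0) : Equiv.Perm (XPlus r s) :=
  (tau r s).subtypePerm (by
    intro x
    have h1 := val_neg_mod_two r hr hr0 x.1
    have h2 := val_neg_mod_two s hs hs0 x.2
    simp only [XPlus, Set.mem_setOf_eq, tau, Equiv.prodCongr_apply, Prod.map,
      Equiv.neg_apply]
    omega)

/-- The restriction of `σμν` to `X⁺`. -/
def sigmaMuNuP (hr : 2 ∣ r) (hr0 : r ≠ 0) (hs : 2 ∣ s) (hs0 : s ≠ 0) :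
    Equiv.Perm (XPlus r s) :=
  (sigmaMuNu r s).subtypePerm (by
    intro x
    have h1 := val_neg_mod_two r hr hr0 (x.1 + 1)
    have h2 := val_add_one_mod_two r hr hr0 x.1
    have h3 := val_add_one_mod_two s hs hs0 x.2
    simp only [XPlus, Set.mem_setOf_eq, sigmaMuNu, Equiv.prodCongr_apply, Prod.map,
      Equiv.trans_apply, Equiv.coe_addRight, Equiv.neg_apply]
    omega)

/-- `G⁺(r,s) = ⟨μ², μν, σ⟩` acting on `X⁺`. -/
def GPlusGroup (hr : 2 ∣ r) (hr0 : r ≠ 0) (hs : 2 ∣ s) (hs0 : s ≠ 0) :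
    Subgroup (Equiv.Perm (XPlus r s)) :=
  Subgroup.closure {muSqP r s hr hr0, muNuP r s hr hr0 hs hs0, sigmaP r s hr hr0}

/-- `H⁺(r,s) = ⟨μ², σμν, τ⟩` acting on `X⁺`. -/
def HPlusGroup (hr : 2 ∣ r) (hr0 : r ≠ 0) (hs : 2 ∣ s) (hs0 : s ≠ 0) :
    Subgroup (Equiv.Perm (XPlus r s)) :=
  Subgroup.closure
    {muSqP r s hr hr0, sigmaMuNuP r s hr hr0 hs hs0, tauP r s hr hr0 hs hs0}

end plusPerms

/-! ### The standard double cover `Γ₂(r,s)` -/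

/-- Adjacency of the double cover: `(i,j)_δ ~ (i ± 1, j ± 1)_{δ+1}`. -/
def gamma2Rel (r s : ℕ) (x y : (ZMod r × ZMod s) × ZMod 2) : Prop :=
  (y.1.1 = x.1.1 + 1 ∨ y.1.1 = x.1.1 - 1) ∧ (y.1.2 = x.1.2 + 1 ∨ y.1.2 = x.1.2 - 1) ∧
    y.2 = x.2 + 1

/-- `Γ₂(r,s)`, the standard double cover of `Γ(r,s)`. -/
def Gamma2 (r s : ℕ) : SimpleGraph ((ZMod r × ZMod s) × ZMod 2) :=
  SimpleGraph.fromRel (gamma2Rel r s)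

/-- `μ : (i,j)_δ ↦ (i+1, j)_δ` on the double cover. -/
def muD (r s : ℕ) : Equiv.Perm ((ZMod r × ZMod s) × ZMod 2) :=
  (mu r s).prodCongr (Equiv.refl (ZMod 2))

/-- `ν : (i,j)_δ ↦ (i, j+1)_δ` on the double cover. -/
def nuD (r s : ℕ) : Equiv.Perm ((ZMod r × ZMod s) × ZMod 2) :=
  (nu r s).prodCongr (Equiv.refl (ZMod 2))

/-- `σ : (i,j)_δ ↦ (i, -j)_{δ+1}` on the double cover. -/
def sigmaD (r s : ℕ) : Equiv.Perm ((ZMod r × ZMod s) × ZMod 2) :=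
  ((Equiv.refl (ZMod r)).prodCongr (Equiv.neg (ZMod s))).prodCongr
    (Equiv.addRight (1 : ZMod 2))

/-- `τ : (i,j)_δ ↦ (-i, -j)_δ` on the double cover. -/
def tauD (r s : ℕ) : Equiv.Perm ((ZMod r × ZMod s) × ZMod 2) :=
  (tau r s).prodCongr (Equiv.refl (ZMod 2))

/-- `G₂(r,s) = ⟨μ, ν, σ, τ⟩` on the double cover. -/
def G2group (r s : ℕ) : Subgroup (Equiv.Perm ((ZMod r × ZMod s) × ZMod 2)) :=
  Subgroup.closure {muD r s, nuD r s, sigmaD r s, tauD r s}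




/-! ### Auxiliary machinery for stmt4 -/

section Stmt4Aux

lemma mk_eq_iff {V : Type*} {N : Subgroup (Equiv.Perm V)} {x y : V} :
    Quotient.mk (orbitSetoid N) x = Quotient.mk (orbitSetoid N) y ↔
      ∃ n : N, (n : Equiv.Perm V) y = x := by
  constructor
  · intro h
    obtain ⟨n, hn⟩ := Quotient.exact h
    exact ⟨n, hn⟩
  · rintro ⟨n, hn⟩
    exact Quotient.sound ⟨n, hn⟩

/-- Translation by `c` in the first coordinate. -/
def T1 (r s : ℕ) (c : ZMod r) : Equiv.Perm ((ZMod r × ZMod s) × ZMod 2) :=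
  ((Equiv.addRight c).prodCongr (Equiv.refl (ZMod s))).prodCongr (Equiv.refl (ZMod 2))

/-- Translation by `c` in the second coordinate. -/
def T2 (r s : ℕ) (c : ZMod s) : Equiv.Perm ((ZMod r × ZMod s) × ZMod 2) :=
  ((Equiv.refl (ZMod r)).prodCongr (Equiv.addRight c)).prodCongr (Equiv.refl (ZMod 2))

lemma T1_apply (r s : ℕ) (c : ZMod r) (i : ZMod r) (j : ZMod s) (d : ZMod 2) :
    T1 r s c ((i, j), d) = ((i + c, j), d) := rfl
lemma T2_apply (r s : ℕ) (c : ZMod s) (i : ZMod r) (j : ZMod s) (d : ZMod 2) :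
    T2 r s c ((i, j), d) = ((i, j + c), d) := rfl

lemma T1_mul (r s : ℕ) (c d : ZMod r) : T1 r s c * T1 r s d = T1 r s (c + d) := by
  apply Equiv.ext; rintro ⟨⟨i, j⟩, e⟩
  simp [Equiv.Perm.mul_apply, T1_apply]; ring
lemma T2_mul (r s : ℕ) (c d : ZMod s) : T2 r s c * T2 r s d = T2 r s (c + d) := by
  apply Equiv.ext; rintro ⟨⟨i, j⟩, e⟩
  simp [Equiv.Perm.mul_apply, T2_apply]; ring

lemma T1_zero (r s : ℕ) : T1 r s 0 = 1 := by
  apply Equiv.ext; rintro ⟨⟨i, j⟩, e⟩; simp [T1_apply]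
lemma T2_zero (r s : ℕ) : T2 r s 0 = 1 := by
  apply Equiv.ext; rintro ⟨⟨i, j⟩, e⟩; simp [T2_apply]

lemma T1_inv (r s : ℕ) (c : ZMod r) : (T1 r s c)⁻¹ = T1 r s (-c) := by
  symm; apply eq_inv_of_mul_eq_one_left; rw [T1_mul]; simp [T1_zero]
lemma T2_inv (r s : ℕ) (c : ZMod s) : (T2 r s c)⁻¹ = T2 r s (-c) := by
  symm; apply eq_inv_of_mul_eq_one_left; rw [T2_mul]; simp [T2_zero]

lemma T1_pow (r s : ℕ) (c : ZMod r) (n : ℕ) : (T1 r s c) ^ n = T1 r s (n • c) := by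
  induction n with
  | zero => simp [T1_zero]
  | succ n ih => rw [pow_succ, ih, T1_mul, succ_nsmul]
lemma T2_pow (r s : ℕ) (c : ZMod s) (n : ℕ) : (T2 r s c) ^ n = T2 r s (n • c) := by
  induction n with
  | zero => simp [T2_zero]
  | succ n ih => rw [pow_succ, ih, T2_mul, succ_nsmul]

lemma T1_zpow (r s : ℕ) (c : ZMod r) (k : ℤ) : (T1 r s c) ^ k = T1 r s ((k : ZMod r) * c) := by
  obtain ⟨n, rfl | rfl⟩ := k.eq_nat_or_neg
  · rw [zpow_natCast, T1_pow]; congr 1; push_cast; rw [nsmul_eq_mul]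
  · rw [zpow_neg, zpow_natCast, T1_pow, T1_inv]; congr 1; push_cast
    rw [nsmul_eq_mul]; ring
lemma T2_zpow (r s : ℕ) (c : ZMod s) (k : ℤ) : (T2 r s c) ^ k = T2 r s ((k : ZMod s) * c) := by
  obtain ⟨n, rfl | rfl⟩ := k.eq_nat_or_neg
  · rw [zpow_natCast, T2_pow]; congr 1; push_cast; rw [nsmul_eq_mul]
  · rw [zpow_neg, zpow_natCast, T2_pow, T2_inv]; congr 1; push_cast
    rw [nsmul_eq_mul]; ring

lemma muD_apply (r s : ℕ) (i : ZMod r) (j : ZMod s) (d : ZMod 2) :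
    muD r s ((i, j), d) = ((i + 1, j), d) := rfl
lemma nuD_apply (r s : ℕ) (i : ZMod r) (j : ZMod s) (d : ZMod 2) :
    nuD r s ((i, j), d) = ((i, j + 1), d) := rfl
lemma sigmaD_apply (r s : ℕ) (i : ZMod r) (j : ZMod s) (d : ZMod 2) :
    sigmaD r s ((i, j), d) = ((i, -j), d + 1) := rfl
lemma tauD_apply (r s : ℕ) (i : ZMod r) (j : ZMod s) (d : ZMod 2) :
    tauD r s ((i, j), d) = ((-i, -j), d) := rfl

lemma muD_T1 (r s : ℕ) (c : ZMod r) : muD r s * T1 r s c = T1 r s c * muD r s := by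
  apply Equiv.ext; rintro ⟨⟨i, j⟩, e⟩
  simp [Equiv.Perm.mul_apply, T1_apply, muD_apply]; ring
lemma nuD_T1 (r s : ℕ) (c : ZMod r) : nuD r s * T1 r s c = T1 r s c * nuD r s := by
  apply Equiv.ext; rintro ⟨⟨i, j⟩, e⟩
  simp [Equiv.Perm.mul_apply, T1_apply, nuD_apply]
lemma sigmaD_T1 (r s : ℕ) (c : ZMod r) : sigmaD r s * T1 r s c = T1 r s c * sigmaD r s := by
  apply Equiv.ext; rintro ⟨⟨i, j⟩, e⟩
  simp [Equiv.Perm.mul_apply, T1_apply, sigmaD_apply]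
lemma tauD_T1 (r s : ℕ) (c : ZMod r) : tauD r s * T1 r s c = T1 r s (-c) * tauD r s := by
  apply Equiv.ext; rintro ⟨⟨i, j⟩, e⟩
  simp [Equiv.Perm.mul_apply, T1_apply, tauD_apply]; ring
lemma muD_T2 (r s : ℕ) (c : ZMod s) : muD r s * T2 r s c = T2 r s c * muD r s := by
  apply Equiv.ext; rintro ⟨⟨i, j⟩, e⟩
  simp [Equiv.Perm.mul_apply, T2_apply, muD_apply]
lemma nuD_T2 (r s : ℕ) (c : ZMod s) : nuD r s * T2 r s c = T2 r s c * nuD r s := by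
  apply Equiv.ext; rintro ⟨⟨i, j⟩, e⟩
  simp [Equiv.Perm.mul_apply, T2_apply, nuD_apply]; ring
lemma sigmaD_T2 (r s : ℕ) (c : ZMod s) : sigmaD r s * T2 r s c = T2 r s (-c) * sigmaD r s := by
  apply Equiv.ext; rintro ⟨⟨i, j⟩, e⟩
  simp [Equiv.Perm.mul_apply, T2_apply, sigmaD_apply]; ring
lemma tauD_T2 (r s : ℕ) (c : ZMod s) : tauD r s * T2 r s c = T2 r s (-c) * tauD r s := by
  apply Equiv.ext; rintro ⟨⟨i, j⟩, e⟩
  simp [Equiv.Perm.mul_apply, T2_apply, tauD_apply]; ring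

lemma conj_of_swap {G : Type*} [Group G] {g T T' : G} (h : g * T = T' * g) :
    g * T * g⁻¹ = T' := by rw [h, mul_inv_cancel_right]

lemma conj_of_swap' {G : Type*} [Group G] {g T T' : G} (h : g * T' = T * g) :
    g⁻¹ * T * g = T' := by rw [mul_assoc, ← h, inv_mul_cancel_left]

lemma conj_closure {G : Type*} [Group G] {S : Set G} {T : G}
    (hgen : ∀ g ∈ S, (g * T * g⁻¹ = T ∨ g * T * g⁻¹ = T⁻¹) ∧
      (g⁻¹ * T * g = T ∨ g⁻¹ * T * g = T⁻¹)) :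
    ∀ h ∈ Subgroup.closure S, h * T * h⁻¹ = T ∨ h * T * h⁻¹ = T⁻¹ := by
  suffices H : ∀ h ∈ Subgroup.closure S, (h * T * h⁻¹ = T ∨ h * T * h⁻¹ = T⁻¹) ∧
      (h⁻¹ * T * h = T ∨ h⁻¹ * T * h = T⁻¹) by
    exact fun h hh => (H h hh).1
  intro h hh
  induction hh using Subgroup.closure_induction with
  | mem x hx => exact hgen x hx
  | one => constructor <;> (left; group)
  | mul x y hx hy ihx ihy =>
    constructor
    · have key : x * y * T * (x * y)⁻¹ = x * (y * T * y⁻¹) * x⁻¹ := by group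
      rcases ihy.1 with h2 | h2
      · rw [key, h2]; exact ihx.1
      · rw [key, h2]
        have e : x * T⁻¹ * x⁻¹ = (x * T * x⁻¹)⁻¹ := by group
        rcases ihx.1 with h1 | h1
        · right; rw [e, h1]
        · left; rw [e, h1]; group
    · have key : (x * y)⁻¹ * T * (x * y) = y⁻¹ * (x⁻¹ * T * x) * y := by group
      rcases ihx.2 with h2 | h2
      · rw [key, h2]; exact ihy.2
      · rw [key, h2]
        have e : y⁻¹ * T⁻¹ * y = (y⁻¹ * T * y)⁻¹ := by group
        rcases ihy.2 with h1 | h1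
        · right; rw [e, h1]
        · left; rw [e, h1]; group
  | inv x hx ihx =>
    constructor
    · simp only [inv_inv]; exact ihx.2
    · simp only [inv_inv]; exact ihx.1

lemma normalIn_zpowers {V : Type*} {H : Subgroup (Equiv.Perm V)} {T : Equiv.Perm V}
    (hT : T ∈ H)
    (hconj : ∀ h ∈ H, h * T * h⁻¹ = T ∨ h * T * h⁻¹ = T⁻¹) :
    NormalIn (Subgroup.zpowers T) H := by
  constructor
  · exact Subgroup.zpowers_le.2 hT
  · intro h hh n hn
    obtain ⟨k, rfl⟩ := Subgroup.mem_zpowers_iff.1 hn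
    have e : h * T ^ k * h⁻¹ = (h * T * h⁻¹) ^ k := by
      simpa [MulAut.conj_apply] using (map_zpow (MulAut.conj h) T k).symm
    rw [e]
    rcases hconj h hh with h1 | h1 <;> rw [h1]
    · exact Subgroup.zpow_mem _ (Subgroup.mem_zpowers T) k
    · exact Subgroup.zpow_mem _ (Subgroup.inv_mem _ (Subgroup.mem_zpowers T)) k

lemma cycle_no_three {m : ℕ} (hm : 3 ≤ m) {v w1 w2 w3 : Fin m}
    (h1 : (cycleGraph m).Adj v w1) (h2 : (cycleGraph m).Adj v w2)
    (h3 : (cycleGraph m).Adj v w3)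
    (d12 : w1 ≠ w2) (d13 : w1 ≠ w3) (d23 : w2 ≠ w3) : False := by
  obtain ⟨n, rfl⟩ : ∃ n, m = n + 3 := ⟨m - 3, by omega⟩
  have key : ∀ w : Fin (n + 3), (cycleGraph (n + 3)).Adj v w → w = v - 1 ∨ w = v + 1 := by
    intro w hw
    have : w ∈ (cycleGraph (n + 1 + 2)).neighborSet v := hw
    rw [cycleGraph_neighborSet] at this
    simpa using this
  rcases key w1 h1 with e1 | e1 <;> rcases key w2 h2 with e2 | e2 <;>
    rcases key w3 h3 with e3 | e3 <;> simp_all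

lemma quot_adj {V : Type*} {Γ : SimpleGraph V} {N : Subgroup (Equiv.Perm V)} {x y : V}
    (hne : Quotient.mk (orbitSetoid N) x ≠ Quotient.mk (orbitSetoid N) y)
    (hadj : Γ.Adj x y) :
    (quotientGraph Γ N).Adj (Quotient.mk (orbitSetoid N) x) (Quotient.mk (orbitSetoid N) y) :=
  ⟨hne, Or.inl ⟨x, y, rfl, rfl, hadj⟩⟩

lemma not_isoCycle {W : Type*} {Δ : SimpleGraph W} {v w1 w2 w3 : W}
    (h1 : Δ.Adj v w1) (h2 : Δ.Adj v w2) (h3 : Δ.Adj v w3)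
    (d12 : w1 ≠ w2) (d13 : w1 ≠ w3) (d23 : w2 ≠ w3) : ¬ IsoCycle Δ := by
  rintro ⟨m, hm, ⟨e⟩⟩
  have inj : Function.Injective e := e.toEquiv.injective
  exact cycle_no_three hm (e.map_adj_iff.2 h1) (e.map_adj_iff.2 h2) (e.map_adj_iff.2 h3)
    (fun h => d12 (inj h)) (fun h => d13 (inj h)) (fun h => d23 (inj h))

lemma zmod_arith {r a : ℕ} (ha : 3 ≤ a) (har : a ∣ r) (k : ℤ) :
    ((k * (a : ℤ) : ℤ) : ZMod r) ≠ 2 := by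
  intro h
  have h2 : ((k * (a : ℤ) - 2 : ℤ) : ZMod r) = 0 := by
    push_cast at h ⊢; linear_combination h
  rw [ZMod.intCast_zmod_eq_zero_iff_dvd] at h2
  have hra : (a : ℤ) ∣ (r : ℤ) := Int.natCast_dvd_natCast.2 har
  have h3 : (a : ℤ) ∣ k * (a : ℤ) - 2 := dvd_trans hra h2
  have h4 : (a : ℤ) ∣ 2 := by
    have := dvd_sub (dvd_mul_left (a : ℤ) k) h3
    simpa using this
  have h5 := Int.le_of_dvd (by norm_num) h4
  omega

lemma zmod_one_ne_neg_one {m : ℕ} (hm : 3 ≤ m) : (1 : ZMod m) ≠ -1 := by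
  intro h
  have h2 : ((2 : ℕ) : ZMod m) = 0 := by push_cast; linear_combination h
  rw [ZMod.natCast_eq_zero_iff] at h2
  have := Nat.le_of_dvd (by norm_num) h2
  omega

lemma mk_eq_N1 {r s a : ℕ} {x y : (ZMod r × ZMod s) × ZMod 2}
    (h : Quotient.mk (orbitSetoid (Subgroup.zpowers (T1 r s (a : ZMod r)))) x =
      Quotient.mk (orbitSetoid (Subgroup.zpowers (T1 r s (a : ZMod r)))) y) :
    (∃ k : ℤ, x.1.1 = y.1.1 + ((k * (a : ℤ) : ℤ) : ZMod r)) ∧ x.1.2 = y.1.2 ∧ x.2 = y.2 := by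
  obtain ⟨n, hx⟩ := mk_eq_iff.1 h
  obtain ⟨k, hk⟩ := Subgroup.mem_zpowers_iff.1 n.2
  obtain ⟨⟨yi, yj⟩, yd⟩ := y
  rw [← hk, T1_zpow, T1_apply] at hx
  refine ⟨⟨k, ?_⟩, ?_, ?_⟩ <;> rw [← hx] <;> push_cast <;> simp

lemma mk_eq_N2 {r s b : ℕ} {x y : (ZMod r × ZMod s) × ZMod 2}
    (h : Quotient.mk (orbitSetoid (Subgroup.zpowers (T2 r s (b : ZMod s)))) x =
      Quotient.mk (orbitSetoid (Subgroup.zpowers (T2 r s (b : ZMod s)))) y) :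
    x.1.1 = y.1.1 ∧ (∃ k : ℤ, x.1.2 = y.1.2 + ((k * (b : ℤ) : ℤ) : ZMod s)) ∧ x.2 = y.2 := by
  obtain ⟨n, hx⟩ := mk_eq_iff.1 h
  obtain ⟨k, hk⟩ := Subgroup.mem_zpowers_iff.1 n.2
  obtain ⟨⟨yi, yj⟩, yd⟩ := y
  rw [← hk, T2_zpow, T2_apply] at hx
  refine ⟨?_, ⟨k, ?_⟩, ?_⟩ <;> rw [← hx] <;> push_cast <;> simp

end Stmt4Aux



section Stmt4Main

lemma gamma2_adj_step {r s : ℕ} (i : ZMod r) (j : ZMod s) (i' : ZMod r) (j' : ZMod s)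
    (h1 : i' = i + 1 ∨ i' = i - 1) (h2 : j' = j + 1 ∨ j' = j - 1) :
    (Gamma2 r s).Adj ((i, j), 0) ((i', j'), 1) := by
  refine (SimpleGraph.fromRel_adj _ _ _).2
    ⟨?_, Or.inl ⟨h1, h2, show (1 : ZMod 2) = 0 + 1 by decide⟩⟩
  intro hc
  have h3 : (0 : ZMod 2) = 1 := congrArg Prod.snd hc
  exact absurd h3 (by decide)

lemma not_basic_of_r {r s a : ℕ} (hr : 3 ≤ r) (hs : 3 ≤ s) (ha : 3 ≤ a)
    (har : a ∣ r) (halt : a < r) : ¬ IsBasic (Gamma2 r s) (G2group r s) := by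
  intro hb
  haveI : NeZero r := ⟨by omega⟩
  haveI : NeZero s := ⟨by omega⟩
  have hmuD : muD r s ∈ G2group r s := Subgroup.subset_closure (by simp)
  have hTm : T1 r s (a : ZMod r) ∈ G2group r s := by
    have h3 : (muD r s) ^ a = T1 r s (a : ZMod r) := by
      have e : muD r s = T1 r s 1 := rfl
      rw [e, T1_pow]
      congr 1
      simp [nsmul_eq_mul]
    rw [← h3]; exact pow_mem hmuD a
  have hconj : ∀ h ∈ G2group r s,
      h * T1 r s (a : ZMod r) * h⁻¹ = T1 r s (a : ZMod r) ∨
      h * T1 r s (a : ZMod r) * h⁻¹ = (T1 r s (a : ZMod r))⁻¹ := by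
    apply conj_closure
    intro g hg
    simp only [Set.mem_insert_iff, Set.mem_singleton_iff] at hg
    rcases hg with rfl | rfl | rfl | rfl
    · exact ⟨Or.inl (conj_of_swap (muD_T1 r s _)), Or.inl (conj_of_swap' (muD_T1 r s _))⟩
    · exact ⟨Or.inl (conj_of_swap (nuD_T1 r s _)), Or.inl (conj_of_swap' (nuD_T1 r s _))⟩
    · exact ⟨Or.inl (conj_of_swap (sigmaD_T1 r s _)), Or.inl (conj_of_swap' (sigmaD_T1 r s _))⟩
    · constructor
      · right; rw [T1_inv]; exact conj_of_swap (tauD_T1 r s _)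
      · right; rw [T1_inv]
        refine conj_of_swap' ?_
        have e := tauD_T1 r s (-(a : ZMod r))
        rwa [neg_neg] at e
  have hnorm : NormalIn (Subgroup.zpowers (T1 r s (a : ZMod r))) (G2group r s) :=
    normalIn_zpowers hTm hconj
  have hA0 : ((a : ZMod r)) ≠ 0 := by
    rw [Ne, ZMod.natCast_eq_zero_iff]
    intro hdvd
    have := Nat.le_of_dvd (by omega) hdvd
    omega
  have hne : Subgroup.zpowers (T1 r s (a : ZMod r)) ≠ ⊥ := by
    rw [Ne, Subgroup.zpowers_eq_bot]
    intro h1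
    have h2 := Equiv.ext_iff.1 h1 ((0, 0), 0)
    rw [T1_apply] at h2
    apply hA0
    have h4 := congrArg (fun p => p.1.1) h2
    simpa using h4
  rcases hb _ hnorm hne with hcard | hcyc
  · have finj : Function.Injective (fun k : Fin 3 =>
        Quotient.mk (orbitSetoid (Subgroup.zpowers (T1 r s (a : ZMod r))))
          (((0 : ZMod r), ((k : ℕ) : ZMod s)), (0 : ZMod 2))) := by
      intro k l hkl
      have h2 := (mk_eq_N1 hkl).2.1
      simp only at h2
      have hk3 : (k : ℕ) < s := by have := k.isLt; omega
      have hl3 : (l : ℕ) < s := by have := l.isLt; omega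
      have h5 := congrArg ZMod.val h2
      rw [ZMod.val_cast_of_lt hk3, ZMod.val_cast_of_lt hl3] at h5
      exact Fin.ext h5
    have h3 := Nat.card_le_card_of_injective _ finj
    simp only [Nat.card_eq_fintype_card, Fintype.card_fin] at h3
    omega
  · have d01 : Quotient.mk (orbitSetoid (Subgroup.zpowers (T1 r s (a : ZMod r))))
        (((0 : ZMod r), (0 : ZMod s)), (0 : ZMod 2)) ≠
        Quotient.mk _ (((1 : ZMod r), (1 : ZMod s)), (1 : ZMod 2)) := by
      intro h
      have h2 : (0 : ZMod 2) = 1 := (mk_eq_N1 h).2.2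
      exact absurd h2 (by decide)
    have d02 : Quotient.mk (orbitSetoid (Subgroup.zpowers (T1 r s (a : ZMod r))))
        (((0 : ZMod r), (0 : ZMod s)), (0 : ZMod 2)) ≠
        Quotient.mk _ (((1 : ZMod r), (-1 : ZMod s)), (1 : ZMod 2)) := by
      intro h
      have h2 : (0 : ZMod 2) = 1 := (mk_eq_N1 h).2.2
      exact absurd h2 (by decide)
    have d03 : Quotient.mk (orbitSetoid (Subgroup.zpowers (T1 r s (a : ZMod r))))
        (((0 : ZMod r), (0 : ZMod s)), (0 : ZMod 2)) ≠
        Quotient.mk _ (((-1 : ZMod r), (1 : ZMod s)), (1 : ZMod 2)) := by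
      intro h
      have h2 : (0 : ZMod 2) = 1 := (mk_eq_N1 h).2.2
      exact absurd h2 (by decide)
    have d12 : Quotient.mk (orbitSetoid (Subgroup.zpowers (T1 r s (a : ZMod r))))
        (((1 : ZMod r), (1 : ZMod s)), (1 : ZMod 2)) ≠
        Quotient.mk _ (((1 : ZMod r), (-1 : ZMod s)), (1 : ZMod 2)) := by
      intro h
      exact zmod_one_ne_neg_one hs (mk_eq_N1 h).2.1
    have d13 : Quotient.mk (orbitSetoid (Subgroup.zpowers (T1 r s (a : ZMod r))))
        (((1 : ZMod r), (1 : ZMod s)), (1 : ZMod 2)) ≠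
        Quotient.mk _ (((-1 : ZMod r), (1 : ZMod s)), (1 : ZMod 2)) := by
      intro h
      obtain ⟨k, hk⟩ := (mk_eq_N1 h).1
      simp only at hk
      exact zmod_arith ha har k (by linear_combination -hk)
    have d23 : Quotient.mk (orbitSetoid (Subgroup.zpowers (T1 r s (a : ZMod r))))
        (((1 : ZMod r), (-1 : ZMod s)), (1 : ZMod 2)) ≠
        Quotient.mk _ (((-1 : ZMod r), (1 : ZMod s)), (1 : ZMod 2)) := by
      intro h
      exact zmod_one_ne_neg_one hs ((mk_eq_N1 h).2.1).symm
    exact not_isoCycle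
      (quot_adj d01 (gamma2_adj_step 0 0 1 1 (Or.inl (by ring)) (Or.inl (by ring))))
      (quot_adj d02 (gamma2_adj_step 0 0 1 (-1) (Or.inl (by ring)) (Or.inr (by ring))))
      (quot_adj d03 (gamma2_adj_step 0 0 (-1) 1 (Or.inr (by ring)) (Or.inl (by ring))))
      d12 d13 d23 hcyc

lemma not_basic_of_s {r s b : ℕ} (hr : 3 ≤ r) (hs : 3 ≤ s) (hb3 : 3 ≤ b)
    (hbs : b ∣ s) (hblt : b < s) : ¬ IsBasic (Gamma2 r s) (G2group r s) := by
  intro hb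
  haveI : NeZero r := ⟨by omega⟩
  haveI : NeZero s := ⟨by omega⟩
  have hnuD : nuD r s ∈ G2group r s := Subgroup.subset_closure (by simp)
  have hTm : T2 r s (b : ZMod s) ∈ G2group r s := by
    have h3 : (nuD r s) ^ b = T2 r s (b : ZMod s) := by
      have e : nuD r s = T2 r s 1 := rfl
      rw [e, T2_pow]
      congr 1
      simp [nsmul_eq_mul]
    rw [← h3]; exact pow_mem hnuD b
  have hconj : ∀ h ∈ G2group r s,
      h * T2 r s (b : ZMod s) * h⁻¹ = T2 r s (b : ZMod s) ∨
      h * T2 r s (b : ZMod s) * h⁻¹ = (T2 r s (b : ZMod s))⁻¹ := by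
    apply conj_closure
    intro g hg
    simp only [Set.mem_insert_iff, Set.mem_singleton_iff] at hg
    have invcase : ∀ g : Equiv.Perm ((ZMod r × ZMod s) × ZMod 2),
        (∀ c : ZMod s, g * T2 r s c = T2 r s (-c) * g) →
        (g * T2 r s (b : ZMod s) * g⁻¹ = T2 r s (b : ZMod s) ∨
          g * T2 r s (b : ZMod s) * g⁻¹ = (T2 r s (b : ZMod s))⁻¹) ∧
        (g⁻¹ * T2 r s (b : ZMod s) * g = T2 r s (b : ZMod s) ∨
          g⁻¹ * T2 r s (b : ZMod s) * g = (T2 r s (b : ZMod s))⁻¹) := by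
      intro g hgc
      constructor
      · right; rw [T2_inv]; exact conj_of_swap (hgc _)
      · right; rw [T2_inv]
        refine conj_of_swap' ?_
        have e := hgc (-(b : ZMod s))
        rwa [neg_neg] at e
    rcases hg with rfl | rfl | rfl | rfl
    · exact ⟨Or.inl (conj_of_swap (muD_T2 r s _)), Or.inl (conj_of_swap' (muD_T2 r s _))⟩
    · exact ⟨Or.inl (conj_of_swap (nuD_T2 r s _)), Or.inl (conj_of_swap' (nuD_T2 r s _))⟩
    · exact invcase _ (fun c => sigmaD_T2 r s c)
    · exact invcase _ (fun c => tauD_T2 r s c)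
  have hnorm : NormalIn (Subgroup.zpowers (T2 r s (b : ZMod s))) (G2group r s) :=
    normalIn_zpowers hTm hconj
  have hA0 : ((b : ZMod s)) ≠ 0 := by
    rw [Ne, ZMod.natCast_eq_zero_iff]
    intro hdvd
    have := Nat.le_of_dvd (by omega) hdvd
    omega
  have hne : Subgroup.zpowers (T2 r s (b : ZMod s)) ≠ ⊥ := by
    rw [Ne, Subgroup.zpowers_eq_bot]
    intro h1
    have h2 := Equiv.ext_iff.1 h1 ((0, 0), 0)
    rw [T2_apply] at h2
    apply hA0
    have h4 := congrArg (fun p => p.1.2) h2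
    simpa using h4
  rcases hb _ hnorm hne with hcard | hcyc
  · have finj : Function.Injective (fun k : Fin 3 =>
        Quotient.mk (orbitSetoid (Subgroup.zpowers (T2 r s (b : ZMod s))))
          ((((k : ℕ) : ZMod r), (0 : ZMod s)), (0 : ZMod 2))) := by
      intro k l hkl
      have h2 := (mk_eq_N2 hkl).1
      simp only at h2
      have hk3 : (k : ℕ) < r := by have := k.isLt; omega
      have hl3 : (l : ℕ) < r := by have := l.isLt; omega
      have h5 := congrArg ZMod.val h2
      rw [ZMod.val_cast_of_lt hk3, ZMod.val_cast_of_lt hl3] at h5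
      exact Fin.ext h5
    have h3 := Nat.card_le_card_of_injective _ finj
    simp only [Nat.card_eq_fintype_card, Fintype.card_fin] at h3
    omega
  · have d01 : Quotient.mk (orbitSetoid (Subgroup.zpowers (T2 r s (b : ZMod s))))
        (((0 : ZMod r), (0 : ZMod s)), (0 : ZMod 2)) ≠
        Quotient.mk _ (((1 : ZMod r), (1 : ZMod s)), (1 : ZMod 2)) := by
      intro h
      have h2 : (0 : ZMod 2) = 1 := (mk_eq_N2 h).2.2
      exact absurd h2 (by decide)
    have d02 : Quotient.mk (orbitSetoid (Subgroup.zpowers (T2 r s (b : ZMod s))))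
        (((0 : ZMod r), (0 : ZMod s)), (0 : ZMod 2)) ≠
        Quotient.mk _ (((-1 : ZMod r), (1 : ZMod s)), (1 : ZMod 2)) := by
      intro h
      have h2 : (0 : ZMod 2) = 1 := (mk_eq_N2 h).2.2
      exact absurd h2 (by decide)
    have d03 : Quotient.mk (orbitSetoid (Subgroup.zpowers (T2 r s (b : ZMod s))))
        (((0 : ZMod r), (0 : ZMod s)), (0 : ZMod 2)) ≠
        Quotient.mk _ (((1 : ZMod r), (-1 : ZMod s)), (1 : ZMod 2)) := by
      intro h
      have h2 : (0 : ZMod 2) = 1 := (mk_eq_N2 h).2.2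
      exact absurd h2 (by decide)
    have d12 : Quotient.mk (orbitSetoid (Subgroup.zpowers (T2 r s (b : ZMod s))))
        (((1 : ZMod r), (1 : ZMod s)), (1 : ZMod 2)) ≠
        Quotient.mk _ (((-1 : ZMod r), (1 : ZMod s)), (1 : ZMod 2)) := by
      intro h
      exact zmod_one_ne_neg_one hr (mk_eq_N2 h).1
    have d13 : Quotient.mk (orbitSetoid (Subgroup.zpowers (T2 r s (b : ZMod s))))
        (((1 : ZMod r), (1 : ZMod s)), (1 : ZMod 2)) ≠
        Quotient.mk _ (((1 : ZMod r), (-1 : ZMod s)), (1 : ZMod 2)) := by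
      intro h
      obtain ⟨k, hk⟩ := (mk_eq_N2 h).2.1
      simp only at hk
      exact zmod_arith hb3 hbs k (by linear_combination -hk)
    have d23 : Quotient.mk (orbitSetoid (Subgroup.zpowers (T2 r s (b : ZMod s))))
        (((-1 : ZMod r), (1 : ZMod s)), (1 : ZMod 2)) ≠
        Quotient.mk _ (((1 : ZMod r), (-1 : ZMod s)), (1 : ZMod 2)) := by
      intro h
      exact zmod_one_ne_neg_one hr ((mk_eq_N2 h).1).symm
    exact not_isoCycle
      (quot_adj d01 (gamma2_adj_step 0 0 1 1 (Or.inl (by ring)) (Or.inl (by ring))))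
      (quot_adj d02 (gamma2_adj_step 0 0 (-1) 1 (Or.inr (by ring)) (Or.inl (by ring))))
      (quot_adj d03 (gamma2_adj_step 0 0 1 (-1) (Or.inl (by ring)) (Or.inr (by ring))))
      d12 d13 d23 hcyc

end Stmt4Main


/-- if `(Γ₂(r,s), G₂(r,s))` (with `r,s ≥ 3` both odd) is basic of cycle type,
then `r` and `s` are both odd primes. -/
theorem stmt4 (r s : ℕ) (hr : 3 ≤ r) (hs : 3 ≤ s) (hro : Odd r) (hso : Odd s)
    (hbasic : BasicOfCycleType (Gamma2 r s) (G2group r s)) :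
    (r.Prime ∧ Odd r) ∧ (s.Prime ∧ Odd s) := by
  have key : ∀ m : ℕ, 3 ≤ m → Odd m → ¬ m.Prime →
      ∃ a : ℕ, 3 ≤ a ∧ a ∣ m ∧ a < m := by
    intro m hm hmo hnp
    have h1 : m ≠ 1 := by omega
    have hpa := Nat.minFac_prime h1
    refine ⟨m.minFac, ?_, Nat.minFac_dvd m, ?_⟩
    · have h2 : m.minFac ≠ 2 := by
        intro h2
        have := Nat.minFac_dvd m
        rw [h2] at this
        rw [Nat.odd_iff] at hmo
        omega
      have := hpa.two_le
      omega
    · rcases lt_or_eq_of_le (Nat.le_of_dvd (by omega) (Nat.minFac_dvd m)) with h | h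
      · exact h
      · exact absurd (h ▸ hpa) hnp
  have hrp : r.Prime := by
    by_contra hnp
    obtain ⟨a, ha3, hdvd, hlt⟩ := key r hr hro hnp
    exact not_basic_of_r hr hs ha3 hdvd hlt hbasic.1
  have hsp : s.Prime := by
    by_contra hnp
    obtain ⟨b, hb3, hdvd, hlt⟩ := key s hs hso hnp
    exact not_basic_of_s hr hs hb3 hdvd hlt hbasic.1
  exact ⟨⟨hrp, hro⟩, ⟨hsp, hso⟩⟩


end OG4
end

section
/- Let (r,s) be one of (4,p), (p,4), or (p,q), where p and q are odd primes (not necessarily distinct). Then for every nontrivial normal subgroup L of G(r,s), the normal quotient Γ(r,s)_L either has at most 2 vertices or is isomorphic to a cycle graph C_m for some m ≥ 3; moreover the normal quotient of Γ(r,s) by ⟨ν⟩ is isomorphic to the cycle C_r and the normal quotient by ⟨μ⟩ is isomorphic to the cycle C_s. In particular, (Γ(r,s), G(r,s)) is basic of cycle type. -/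
open SimpleGraph

namespace OG4

variable {V : Type*} {W : Type*}

set_option linter.unusedSectionVars false

section AuxOG4
variable {r s : ℕ}
def tr (r s : ℕ) (a : ZMod r) (b : ZMod s) : Equiv.Perm (ZMod r × ZMod s) :=
  (Equiv.addRight a).prodCongr (Equiv.addRight b)
def rf (r s : ℕ) (c : ZMod r) (d : ZMod s) : Equiv.Perm (ZMod r × ZMod s) :=
  ((Equiv.neg (ZMod r)).trans (Equiv.addRight c)).prodCongr (Equiv.addRight d)
@[simp] lemma tr_apply (a : ZMod r) (b : ZMod s) (x : ZMod r × ZMod s) :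
    tr r s a b x = (x.1 + a, x.2 + b) := rfl
@[simp] lemma rf_apply (c : ZMod r) (d : ZMod s) (x : ZMod r × ZMod s) :
    rf r s c d x = (-x.1 + c, x.2 + d) := rfl
lemma tr_mul_tr (a a' : ZMod r) (b b' : ZMod s) :
    tr r s a b * tr r s a' b' = tr r s (a + a') (b + b') := by
  ext x <;> simp [Equiv.Perm.mul_apply] <;> ring
lemma tr_mul_rf (a c : ZMod r) (b d : ZMod s) :
    tr r s a b * rf r s c d = rf r s (c + a) (d + b) := by
  ext x <;> simp [Equiv.Perm.mul_apply] <;> ring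
lemma rf_mul_tr (c a : ZMod r) (d b : ZMod s) :
    rf r s c d * tr r s a b = rf r s (c - a) (d + b) := by
  ext x <;> simp [Equiv.Perm.mul_apply] <;> ring
lemma rf_mul_rf (c c' : ZMod r) (d d' : ZMod s) :
    rf r s c d * rf r s c' d' = tr r s (c - c') (d + d') := by
  ext x <;> simp [Equiv.Perm.mul_apply] <;> ring
@[simp] lemma tr_zero : tr r s 0 0 = 1 := by ext x <;> simp
lemma tr_inv (a : ZMod r) (b : ZMod s) : (tr r s a b)⁻¹ = tr r s (-a) (-b) := by
  apply inv_eq_of_mul_eq_one_right; rw [tr_mul_tr]; simp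
lemma rf_inv (c : ZMod r) (d : ZMod s) : (rf r s c d)⁻¹ = rf r s c (-d) := by
  apply inv_eq_of_mul_eq_one_right; rw [rf_mul_rf]; simp

lemma mu_eq : mu r s = tr r s 1 0 := by ext x <;> simp [mu, tr]
lemma nu_eq : nu r s = tr r s 0 1 := by ext x <;> simp [nu, tr]
lemma sigma_eq : sigma r s = rf r s 0 0 := by ext x <;> simp [sigma, rf]

lemma mem_G_cases {g : Equiv.Perm (ZMod r × ZMod s)} (hg : g ∈ Ggroup r s) :
    (∃ a b, g = tr r s a b) ∨ (∃ c d, g = rf r s c d) := by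
  induction hg using Subgroup.closure_induction with
  | mem g hg =>
    rcases hg with h | h | h
    · exact Or.inl ⟨1, 0, by rw [h, mu_eq]⟩
    · exact Or.inl ⟨0, 1, by rw [h, nu_eq]⟩
    · exact Or.inr ⟨0, 0, by rw [h, sigma_eq]⟩
  | one => exact Or.inl ⟨0, 0, (tr_zero).symm⟩
  | mul g h _ _ ihg ihh =>
    rcases ihg with ⟨a, b, rfl⟩ | ⟨c, d, rfl⟩ <;> rcases ihh with ⟨a', b', rfl⟩ | ⟨c', d', rfl⟩
    · exact Or.inl ⟨_, _, tr_mul_tr ..⟩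
    · exact Or.inr ⟨_, _, tr_mul_rf ..⟩
    · exact Or.inr ⟨_, _, rf_mul_tr ..⟩
    · exact Or.inl ⟨_, _, rf_mul_rf ..⟩
  | inv g _ ihg =>
    rcases ihg with ⟨a, b, rfl⟩ | ⟨c, d, rfl⟩
    · exact Or.inl ⟨_, _, tr_inv ..⟩
    · exact Or.inr ⟨_, _, rf_inv ..⟩

lemma tr_pow_fst (n : ℕ) : (tr r s 1 0) ^ n = tr r s (n : ZMod r) 0 := by
  induction n with
  | zero => simp
  | succ n ih => rw [pow_succ, ih, tr_mul_tr]; push_cast; ring_nf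

lemma tr_mem_G [NeZero r] [NeZero s] (a : ZMod r) (b : ZMod s) : tr r s a b ∈ Ggroup r s := by
  have h1 : tr r s a 0 ∈ Ggroup r s := by
    have : tr r s a 0 = (mu r s) ^ a.val := by
      rw [mu_eq, tr_pow_fst, ZMod.natCast_rightInverse a]
    rw [this]
    exact pow_mem (Subgroup.subset_closure (by simp)) _
  have h2 : tr r s 0 b ∈ Ggroup r s := by
    have hp : (tr r s 0 1) ^ b.val = tr r s 0 ((b.val : ZMod s)) := by
      induction b.val with
      | zero => simp
      | succ n ih => rw [pow_succ, ih, tr_mul_tr]; push_cast; ring_nf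
    have : tr r s 0 b = (nu r s) ^ b.val := by
      rw [nu_eq, hp, ZMod.natCast_rightInverse b]
    rw [this]
    exact pow_mem (Subgroup.subset_closure (by simp)) _
  have := mul_mem h1 h2
  rwa [tr_mul_tr, add_zero, zero_add] at this

lemma rf_mem_G [NeZero r] [NeZero s] (c : ZMod r) (d : ZMod s) : rf r s c d ∈ Ggroup r s := by
  have : rf r s c d = tr r s c d * sigma r s := by rw [sigma_eq, tr_mul_rf]; simp
  rw [this]
  exact mul_mem (tr_mem_G c d) (Subgroup.subset_closure (by simp))

lemma mkeq_iff (L : Subgroup (Equiv.Perm (ZMod r × ZMod s))) (x y : ZMod r × ZMod s) :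
    Quotient.mk (orbitSetoid L) x = Quotient.mk (orbitSetoid L) y ↔ ∃ g ∈ L, g y = x := by
  rw [Quotient.eq]
  show x ∈ MulAction.orbit L y ↔ _
  constructor
  · rintro ⟨⟨g, hg⟩, rfl⟩; exact ⟨g, hg, rfl⟩
  · rintro ⟨g, hg, h⟩; exact ⟨⟨g, hg⟩, h⟩


/-- first-coordinate translation subgroup of `L` -/
def Asub (L : Subgroup (Equiv.Perm (ZMod r × ZMod s))) : AddSubgroup (ZMod r) where
  carrier := {a | tr r s a 0 ∈ L}
  zero_mem' := by simp [Set.mem_setOf_eq, tr_zero]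
  add_mem' := by
    intro a a' ha ha'
    have := mul_mem (show tr r s a 0 ∈ L from ha) (show tr r s a' 0 ∈ L from ha')
    rwa [tr_mul_tr, add_zero] at this
  neg_mem' := by
    intro a ha
    have := inv_mem (show tr r s a 0 ∈ L from ha)
    rwa [tr_inv, neg_zero] at this

def Bsub (L : Subgroup (Equiv.Perm (ZMod r × ZMod s))) : AddSubgroup (ZMod s) where
  carrier := {b | tr r s 0 b ∈ L}
  zero_mem' := by simp [Set.mem_setOf_eq, tr_zero]
  add_mem' := by
    intro a a' ha ha'
    have := mul_mem (show tr r s 0 a ∈ L from ha) (show tr r s 0 a' ∈ L from ha')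
    rwa [tr_mul_tr, add_zero] at this
  neg_mem' := by
    intro a ha
    have := inv_mem (show tr r s 0 a ∈ L from ha)
    rwa [tr_inv, neg_zero] at this

lemma mem_Asub {L : Subgroup (Equiv.Perm (ZMod r × ZMod s))} {a : ZMod r} :
    a ∈ Asub L ↔ tr r s a 0 ∈ L := Iff.rfl
lemma mem_Bsub {L : Subgroup (Equiv.Perm (ZMod r × ZMod s))} {b : ZMod s} :
    b ∈ Bsub L ↔ tr r s 0 b ∈ L := Iff.rfl

lemma mem_of_isUnit_mem {n : ℕ} [NeZero n] {A : AddSubgroup (ZMod n)} {a : ZMod n}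
    (hu : IsUnit a) (ha : a ∈ A) (x : ZMod n) : x ∈ A := by
  have h := AddSubgroup.nsmul_mem A ha (x * ↑hu.unit⁻¹).val
  rw [nsmul_eq_mul, ZMod.natCast_rightInverse _, mul_assoc] at h
  rwa [IsUnit.val_inv_mul, mul_one] at h

lemma mem_of_unit_mul_mem {n : ℕ} [NeZero n] {A : AddSubgroup (ZMod n)} {u x : ZMod n}
    (hu : IsUnit u) (hx : u * x ∈ A) : x ∈ A := by
  have h := AddSubgroup.nsmul_mem A hx (↑hu.unit⁻¹ : ZMod n).val
  rw [nsmul_eq_mul, ZMod.natCast_rightInverse _, ← mul_assoc] at h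
  rwa [IsUnit.val_inv_mul, one_mul] at h

section Norm
variable {L : Subgroup (Equiv.Perm (ZMod r × ZMod s))} [NeZero r] [NeZero s]

omit [NeZero r] [NeZero s] in
lemma sigma_conj (hN : NormalIn L (Ggroup r s)) {a : ZMod r} {b : ZMod s}
    (h : tr r s a b ∈ L) : tr r s (-a) b ∈ L := by
  have hs : sigma r s ∈ Ggroup r s := Subgroup.subset_closure (by simp)
  have := hN.2 _ hs _ h
  rw [sigma_eq, rf_mul_tr, rf_inv, neg_zero, rf_mul_rf] at this
  simpa using this

lemma two_smul_mem (hN : NormalIn L (Ggroup r s)) {a : ZMod r} {b : ZMod s}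
    (h : tr r s a b ∈ L) : 2 * a ∈ Asub L ∧ 2 * b ∈ Bsub L := by
  have h2 := sigma_conj hN h
  constructor
  · have := mul_mem h (inv_mem h2)
    rw [tr_inv, tr_mul_tr, neg_neg] at this
    rw [mem_Asub]
    convert this using 2 <;> ring
  · have := mul_mem h2 h
    rw [tr_mul_tr] at this
    rw [mem_Bsub]
    convert this using 2 <;> ring

lemma decouple (hN : NormalIn L (Ggroup r s))
    (hu : IsUnit (2 : ZMod r) ∨ IsUnit (2 : ZMod s)) {a : ZMod r} {b : ZMod s}
    (h : tr r s a b ∈ L) : a ∈ Asub L ∧ b ∈ Bsub L := by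
  rcases hu with hu | hu
  · have ha : a ∈ Asub L := mem_of_unit_mul_mem hu (two_smul_mem hN h).1
    refine ⟨ha, ?_⟩
    have := mul_mem (inv_mem (mem_Asub.mp ha)) h
    rw [tr_inv, neg_zero, tr_mul_tr] at this
    rw [mem_Bsub]
    convert this using 2 <;> ring
  · have hb : b ∈ Bsub L := mem_of_unit_mul_mem hu (two_smul_mem hN h).2
    refine ⟨?_, hb⟩
    have := mul_mem h (inv_mem (mem_Bsub.mp hb))
    rw [tr_inv, neg_zero, tr_mul_tr] at this
    rw [mem_Asub]
    convert this using 2 <;> ring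

lemma refl_facts (hN : NormalIn L (Ggroup r s))
    (hu : IsUnit (2 : ZMod r) ∨ IsUnit (2 : ZMod s)) {c : ZMod r} {d : ZMod s}
    (h : rf r s c d ∈ L) :
    (2 : ZMod r) ∈ Asub L ∧ 2 * d ∈ Bsub L ∧
      ∀ c' d', (rf r s c' d' ∈ L ↔ c' - c ∈ Asub L ∧ d' - d ∈ Bsub L) := by
  have hmu : mu r s ∈ Ggroup r s := Subgroup.subset_closure (by simp)
  have hconj := hN.2 _ hmu _ h
  rw [mu_eq, tr_inv, neg_zero, tr_mul_rf, rf_mul_tr] at hconj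
  have h2 : tr r s 2 0 ∈ L := by
    have := mul_mem hconj (inv_mem h)
    rw [rf_inv, rf_mul_rf] at this
    convert this using 2 <;> ring
  have hsq : tr r s 0 (2 * d) ∈ L := by
    have := mul_mem h h
    rw [rf_mul_rf] at this
    convert this using 2 <;> ring
  refine ⟨h2, hsq, fun c' d' => ?_⟩
  constructor
  · intro h'
    have := mul_mem h' (inv_mem h)
    rw [rf_inv, rf_mul_rf, ← sub_eq_add_neg] at this
    exact decouple hN hu this
  · rintro ⟨h1, h2'⟩
    have := mul_mem (mul_mem (mem_Asub.mp h1) (mem_Bsub.mp h2')) h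
    rw [tr_mul_tr, tr_mul_rf] at this
    convert this using 2 <;> ring

lemma mkeq_T (hN : NormalIn L (Ggroup r s))
    (hu : IsUnit (2 : ZMod r) ∨ IsUnit (2 : ZMod s))
    (href : ∀ c d, rf r s c d ∉ L) (x y : ZMod r × ZMod s) :
    Quotient.mk (orbitSetoid L) x = Quotient.mk (orbitSetoid L) y ↔
      (x.1 - y.1 ∈ Asub L ∧ x.2 - y.2 ∈ Bsub L) := by
  rw [mkeq_iff]
  constructor
  · rintro ⟨g, hg, rfl⟩
    rcases mem_G_cases (hN.1 hg) with ⟨a, b, rfl⟩ | ⟨c, d, rfl⟩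
    · have := decouple hN hu hg
      simpa using this
    · exact absurd hg (href c d)
  · rintro ⟨h1, h2⟩
    refine ⟨tr r s (x.1 - y.1) (x.2 - y.2), ?_, ?_⟩
    · have := mul_mem (mem_Asub.mp h1) (mem_Bsub.mp h2)
      rwa [tr_mul_tr, add_zero, zero_add] at this
    · refine Prod.ext ?_ ?_ <;> simp <;> ring

lemma mkeq_R (hN : NormalIn L (Ggroup r s))
    (hu : IsUnit (2 : ZMod r) ∨ IsUnit (2 : ZMod s))
    {c : ZMod r} {d : ZMod s} (h : rf r s c d ∈ L) (x y : ZMod r × ZMod s) :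
    Quotient.mk (orbitSetoid L) x = Quotient.mk (orbitSetoid L) y ↔
      ((x.1 - y.1 ∈ Asub L ∧ x.2 - y.2 ∈ Bsub L) ∨
        (x.1 + y.1 - c ∈ Asub L ∧ x.2 - y.2 - d ∈ Bsub L)) := by
  rw [mkeq_iff]
  have hiff := (refl_facts hN hu h).2.2
  constructor
  · rintro ⟨g, hg, rfl⟩
    rcases mem_G_cases (hN.1 hg) with ⟨a, b, rfl⟩ | ⟨c', d', rfl⟩
    · left; simpa using decouple hN hu hg
    · right
      have := (hiff c' d').mp hg
      simpa using this
  · rintro (⟨h1, h2⟩ | ⟨h1, h2⟩)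
    · refine ⟨tr r s (x.1 - y.1) (x.2 - y.2), ?_, ?_⟩
      · have := mul_mem (mem_Asub.mp h1) (mem_Bsub.mp h2)
        rwa [tr_mul_tr, add_zero, zero_add] at this
      · refine Prod.ext ?_ ?_ <;> simp <;> ring
    · refine ⟨rf r s (x.1 + y.1) (x.2 - y.2), ?_, ?_⟩
      · refine (hiff _ _).mpr ⟨?_, ?_⟩
        · convert h1 using 1
        · convert h2 using 1
      · refine Prod.ext ?_ ?_ <;> simp <;> ring

end Norm

section Master
variable {L : Subgroup (Equiv.Perm (ZMod r × ZMod s))} {m : ℕ}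

lemma gammaRel_symm {x y : ZMod r × ZMod s} (h : gammaRel r s x y) : gammaRel r s y x := by
  obtain ⟨h1 | h1, h2 | h2⟩ := h
  · exact ⟨Or.inr (by rw [h1]; ring), Or.inr (by rw [h2]; ring)⟩
  · exact ⟨Or.inr (by rw [h1]; ring), Or.inl (by rw [h2]; ring)⟩
  · exact ⟨Or.inl (by rw [h1]; ring), Or.inr (by rw [h2]; ring)⟩
  · exact ⟨Or.inl (by rw [h1]; ring), Or.inl (by rw [h2]; ring)⟩

lemma gamma_adj {x y : ZMod r × ZMod s} :
    (Gamma r s).Adj x y ↔ x ≠ y ∧ gammaRel r s x y := by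
  rw [Gamma, SimpleGraph.fromRel_adj]
  constructor
  · rintro ⟨hne, h | h⟩
    · exact ⟨hne, h⟩
    · exact ⟨hne, gammaRel_symm h⟩
  · rintro ⟨hne, h⟩
    exact ⟨hne, Or.inl h⟩

lemma sub_mem_steps {x y : ZMod r × ZMod s} (h : gammaRel r s x y) :
    y - x = (1, 1) ∨ y - x = (1, -1) ∨ y - x = (-1, 1) ∨ y - x = (-1, -1) := by
  obtain ⟨h1 | h1, h2 | h2⟩ := h
  · exact Or.inl (by rw [Prod.ext_iff]; constructor <;> simp [h1, h2] <;> ring)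
  · exact Or.inr (Or.inl (by rw [Prod.ext_iff]; constructor <;> simp [h1, h2] <;> ring))
  · exact Or.inr (Or.inr (Or.inl (by rw [Prod.ext_iff]; constructor <;> simp [h1, h2] <;> ring)))
  · exact Or.inr (Or.inr (Or.inr (by rw [Prod.ext_iff]; constructor <;> simp [h1, h2] <;> ring)))

lemma isoCycle_master (hr : 2 ≤ r) (hm : 3 ≤ m)
    (φ : ZMod r × ZMod s →+ ZMod m)
    (hrel : ∀ x y, Quotient.mk (orbitSetoid L) x = Quotient.mk (orbitSetoid L) y ↔ φ x = φ y)
    (h11 : φ (1, 1) = 1 ∨ φ (1, 1) = -1)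
    (h1m : φ (1, -1) = 1 ∨ φ (1, -1) = -1) :
    Nonempty (quotientGraph (Gamma r s) L ≃g cycleGraph m) := by
  haveI : NeZero m := ⟨by omega⟩
  haveI : Fact (1 < m) := ⟨by omega⟩
  haveI : Fact (1 < r) := ⟨by omega⟩
  -- step values
  have hneg1 : φ (-1, -1) = 1 ∨ φ (-1, -1) = -1 := by
    have : ((-1 : ZMod r), (-1 : ZMod s)) = -(1, 1) := by rw [Prod.ext_iff]; simp
    rw [this, map_neg]
    rcases h11 with h | h <;> rw [h] <;> simp
  have hneg2 : φ (-1, 1) = 1 ∨ φ (-1, 1) = -1 := by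
    have : ((-1 : ZMod r), (1 : ZMod s)) = -(1, -1) := by rw [Prod.ext_iff]; simp
    rw [this, map_neg]
    rcases h1m with h | h <;> rw [h] <;> simp
  have hstep : ∀ x y : ZMod r × ZMod s, gammaRel r s x y →
      φ y = φ x + 1 ∨ φ x = φ y + 1 := by
    intro x y h
    have hsub : φ y - φ x = φ (y - x) := (map_sub φ y x).symm
    have key : φ (y - x) = 1 ∨ φ (y - x) = -1 := by
      rcases sub_mem_steps h with h' | h' | h' | h' <;> rw [h']
      exacts [h11, h1m, hneg2, hneg1]
    rcases key with h' | h'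
    · left; rw [h'] at hsub; linear_combination hsub
    · right; rw [h'] at hsub; linear_combination -hsub
  -- the quotient adjacency
  have quot_adj : ∀ x y : ZMod r × ZMod s,
      (quotientGraph (Gamma r s) L).Adj (Quotient.mk (orbitSetoid L) x)
        (Quotient.mk (orbitSetoid L) y) ↔ (φ y = φ x + 1 ∨ φ x = φ y + 1) := by
    intro x y
    rw [quotientGraph, SimpleGraph.fromRel_adj]
    constructor
    · rintro ⟨hne, ⟨x', y', hx', hy', hadj⟩ | ⟨y', x', hy', hx', hadj⟩⟩ <;>
      · obtain ⟨hne', hg⟩ := gamma_adj.mp hadj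
        have h1 : φ x' = φ x := (hrel x' x).mp (by rw [hx'])
        have h2 : φ y' = φ y := (hrel y' y).mp (by rw [hy'])
        have ha := hstep _ _ hg
        rw [h1, h2] at ha
        tauto
    · intro hor
      have hne : Quotient.mk (orbitSetoid L) x ≠ Quotient.mk (orbitSetoid L) y := by
        rw [Ne, hrel]
        rcases hor with h | h
        · rw [h]; intro hc; exact one_ne_zero (α := ZMod m) (by linear_combination -hc)
        · rw [h]; intro hc; exact one_ne_zero (α := ZMod m) (by linear_combination hc)
      refine ⟨hne, ?_⟩
      obtain ⟨d, hd1, hdr⟩ : ∃ d : ZMod r × ZMod s, φ d = 1 ∧ ∀ z, gammaRel r s z (z + d) := by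
        rcases h11 with h | h
        · exact ⟨(1, 1), h, fun z => ⟨Or.inl rfl, Or.inl rfl⟩⟩
        · refine ⟨(-1, -1), ?_, fun z =>
            ⟨Or.inr (by rw [Prod.fst_add]; ring), Or.inr (by rw [Prod.snd_add]; ring)⟩⟩
          have : ((-1 : ZMod r), (-1 : ZMod s)) = -(1, 1) := by rw [Prod.ext_iff]; simp
          rw [this, map_neg, h]; simp
      have hadj : ∀ z : ZMod r × ZMod s, (Gamma r s).Adj z (z + d) := by
        intro z
        rw [gamma_adj]
        refine ⟨?_, hdr z⟩
        intro hc
        have : φ z = φ z + 1 := by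
          conv_lhs => rw [hc]
          rw [map_add, hd1]
        exact one_ne_zero (by linear_combination -this)
      rcases hor with h | h
      · refine Or.inl ⟨x, x + d, rfl, ?_, hadj x⟩
        rw [hrel, map_add, hd1, h]
      · refine Or.inr ⟨y, y + d, rfl, ?_, hadj y⟩
        rw [hrel, map_add, hd1, h]
  -- the vertex bijection
  have hsurj : Function.Surjective φ := by
    obtain ⟨z, hz⟩ : ∃ z : ZMod r × ZMod s, φ z = 1 := by
      rcases h11 with h | h
      · exact ⟨(1, 1), h⟩
      · refine ⟨-(1, 1), ?_⟩; rw [map_neg, h]; simp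
    intro v
    refine ⟨v.val • z, ?_⟩
    rw [map_nsmul, hz, nsmul_eq_mul, mul_one, ZMod.natCast_rightInverse v]
  let f : Quotient (orbitSetoid L) → ZMod m :=
    Quotient.lift (fun x => φ x) (fun a b hab => (hrel a b).mp (Quotient.sound hab))
  have hfb : Function.Bijective f := by
    constructor
    · intro a b
      induction a using Quotient.inductionOn with | _ x =>
      induction b using Quotient.inductionOn with | _ y =>
      intro h
      exact (hrel x y).mpr h
    · intro v
      obtain ⟨x, hx⟩ := hsurj v
      exact ⟨Quotient.mk (orbitSetoid L) x, hx⟩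
  obtain ⟨m', rfl⟩ : ∃ m', m = m' + 2 := ⟨m - 2, by omega⟩
  let e2 : ZMod (m' + 2) ≃ Fin (m' + 2) := Equiv.refl _
  refine ⟨⟨(Equiv.ofBijective f hfb).trans e2, ?_⟩⟩
  intro a b
  induction a using Quotient.inductionOn with | _ x =>
  induction b using Quotient.inductionOn with | _ y =>
  show (cycleGraph (m' + 2)).Adj (e2 (φ x)) (e2 (φ y)) ↔ _
  rw [cycleGraph_adj, quot_adj x y]
  show ((φ x : ZMod (m' + 2)) - φ y = 1 ∨ (φ y : ZMod (m' + 2)) - φ x = 1) ↔ _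
  constructor
  · rintro (h | h)
    · exact Or.inr (by linear_combination h)
    · exact Or.inl (by linear_combination h)
  · rintro (h | h)
    · exact Or.inr (by linear_combination h)
    · exact Or.inl (by linear_combination h)

lemma card_le_master [NeZero m] (φ : ZMod r × ZMod s → ZMod m)
    (g : ZMod m → ZMod r × ZMod s)
    (hglue : ∀ x, Quotient.mk (orbitSetoid L) (g (φ x)) = Quotient.mk (orbitSetoid L) x) :
    Nat.card (Quotient (orbitSetoid L)) ≤ m := by
  have hsurj : Function.Surjective
      (fun v : ZMod m => Quotient.mk (orbitSetoid L) (g v)) := by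
    intro q
    induction q using Quotient.inductionOn with | _ x =>
    exact ⟨φ x, hglue x⟩
  calc Nat.card (Quotient (orbitSetoid L)) ≤ Nat.card (ZMod m) :=
        Nat.card_le_card_of_surjective _ hsurj
    _ = m := Nat.card_zmod m

end Master

section Wrappers
variable {L : Subgroup (Equiv.Perm (ZMod r × ZMod s))}

lemma iso_fst (hr3 : 3 ≤ r) (hs3 : 3 ≤ s)
    (h : ∀ x y : ZMod r × ZMod s,
      Quotient.mk (orbitSetoid L) x = Quotient.mk (orbitSetoid L) y ↔ x.1 = y.1) :
    Nonempty (quotientGraph (Gamma r s) L ≃g cycleGraph r) :=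
  isoCycle_master (by omega) hr3 (AddMonoidHom.fst (ZMod r) (ZMod s)) h
    (Or.inl rfl) (Or.inl rfl)

lemma iso_snd (hr3 : 3 ≤ r) (hs3 : 3 ≤ s)
    (h : ∀ x y : ZMod r × ZMod s,
      Quotient.mk (orbitSetoid L) x = Quotient.mk (orbitSetoid L) y ↔ x.2 = y.2) :
    Nonempty (quotientGraph (Gamma r s) L ≃g cycleGraph s) :=
  isoCycle_master (by omega) hs3 (AddMonoidHom.snd (ZMod r) (ZMod s)) h
    (Or.inl rfl) (Or.inr rfl)

end Wrappers

section CRT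

/-- reduction mod 2 on `ZMod 4` -/
def c42 : ZMod 4 →+ ZMod 2 := AddMonoidHom.mk' (fun u => (u.val : ZMod 2)) (by decide)

lemma c42_iff : ∀ u v : ZMod 4, c42 u = c42 v ↔ (u - v = 0 ∨ u - v = 2) := by decide
lemma c42_one : c42 1 = 1 := by decide
lemma c42_neg_one : c42 (-1) = 1 := by decide
lemma c42_sec : ∀ v : ZMod 2, c42 ((v.val : ZMod 4)) = v := by decide
lemma c42_sub : ∀ u : ZMod 4,
    ((c42 u).val : ZMod 4) - u = 0 ∨ ((c42 u).val : ZMod 4) - u = 2 := by decide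

lemma iso_crt_fst {s : ℕ} (hs3 : 3 ≤ s) (hodd : Odd s)
    {L : Subgroup (Equiv.Perm (ZMod 4 × ZMod s))}
    (h : ∀ x y : ZMod 4 × ZMod s,
      Quotient.mk (orbitSetoid L) x = Quotient.mk (orbitSetoid L) y ↔
        ((x.1 - y.1 = 0 ∨ x.1 - y.1 = 2) ∧ x.2 = y.2)) :
    Nonempty (quotientGraph (Gamma 4 s) L ≃g cycleGraph (2 * s)) := by
  have co : Nat.Coprime 2 s := Nat.coprime_two_left.mpr hodd
  set crt := ZMod.chineseRemainder co with hcrt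
  let φ : ZMod 4 × ZMod s →+ ZMod (2 * s) :=
    (crt.symm : ZMod 2 × ZMod s ≃+* ZMod (2 * s)).toAddMonoidHom.comp
      (c42.prodMap (AddMonoidHom.id (ZMod s)))
  have hφ : ∀ x : ZMod 4 × ZMod s, φ x = crt.symm (c42 x.1, x.2) := fun _ => rfl
  refine isoCycle_master (by omega) (by omega) φ ?_ ?_ ?_
  · intro x y
    rw [h x y, hφ, hφ, (EquivLike.injective crt.symm).eq_iff, Prod.ext_iff, c42_iff]
  · left
    rw [hφ]
    have h1 : ((c42 1, (1 : ZMod s)) : ZMod 2 × ZMod s) = 1 := by rw [c42_one]; rfl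
    rw [h1, map_one]
  · right
    rw [hφ]
    have h1 : ((c42 1, (-1 : ZMod s)) : ZMod 2 × ZMod s) = -1 := by
      rw [c42_one]
      show ((1 : ZMod 2), (-1 : ZMod s)) = (-1, -1)
      rw [Prod.mk.injEq]
      exact ⟨by decide, rfl⟩
    rw [h1, map_neg, map_one]

lemma iso_crt_snd {r : ℕ} (hr3 : 3 ≤ r) (hodd : Odd r)
    {L : Subgroup (Equiv.Perm (ZMod r × ZMod 4))}
    (h : ∀ x y : ZMod r × ZMod 4,
      Quotient.mk (orbitSetoid L) x = Quotient.mk (orbitSetoid L) y ↔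
        (x.1 = y.1 ∧ (x.2 - y.2 = 0 ∨ x.2 - y.2 = 2))) :
    Nonempty (quotientGraph (Gamma r 4) L ≃g cycleGraph (r * 2)) := by
  have co : Nat.Coprime r 2 := Nat.coprime_two_right.mpr hodd
  set crt := ZMod.chineseRemainder co with hcrt
  let φ : ZMod r × ZMod 4 →+ ZMod (r * 2) :=
    (crt.symm : ZMod r × ZMod 2 ≃+* ZMod (r * 2)).toAddMonoidHom.comp
      ((AddMonoidHom.id (ZMod r)).prodMap c42)
  have hφ : ∀ x : ZMod r × ZMod 4, φ x = crt.symm (x.1, c42 x.2) := fun _ => rfl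
  refine isoCycle_master (by omega) (by omega) φ ?_ ?_ ?_
  · intro x y
    rw [h x y, hφ, hφ, (EquivLike.injective crt.symm).eq_iff, Prod.ext_iff, c42_iff]
  · left
    rw [hφ]
    have h1 : (((1 : ZMod r), c42 1) : ZMod r × ZMod 2) = 1 := by rw [c42_one]; rfl
    rw [h1, map_one]
  · left
    rw [hφ]
    have h1 : (((1 : ZMod r), c42 (-1)) : ZMod r × ZMod 2) = 1 := by rw [c42_neg_one]; rfl
    rw [h1, map_one]

end CRT

section Classify

lemma classify_prime {p : ℕ} (hp : p.Prime) (A : AddSubgroup (ZMod p)) :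
    (∀ x, x ∈ A) ∨ (∀ x ∈ A, x = 0) := by
  haveI : Fact p.Prime := ⟨hp⟩
  by_cases h : ∃ a ∈ A, a ≠ 0
  · obtain ⟨a, ha, hne⟩ := h
    exact Or.inl (mem_of_isUnit_mem (isUnit_iff_ne_zero.mpr hne) ha)
  · push_neg at h
    exact Or.inr h

lemma classify_four (A : AddSubgroup (ZMod 4)) :
    (∀ x, x ∈ A) ∨ (∀ x ∈ A, x = 0 ∨ x = 2) := by
  by_cases h : (1 : ZMod 4) ∈ A ∨ (3 : ZMod 4) ∈ A
  · rcases h with h | h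
    · exact Or.inl (mem_of_isUnit_mem (by decide) h)
    · exact Or.inl (mem_of_isUnit_mem (by decide) h)
  · push_neg at h
    right
    intro x hx
    have hcases := (by decide : ∀ z : ZMod 4, z = 0 ∨ z = 1 ∨ z = 2 ∨ z = 3) x
    rcases hcases with h' | h' | h' | h'
    · exact Or.inl h'
    · exact absurd (h' ▸ hx) h.1
    · exact Or.inr h'
    · exact absurd (h' ▸ hx) h.2

lemma mem_of_02 {A : AddSubgroup (ZMod 4)} (h2 : (2 : ZMod 4) ∈ A) {x : ZMod 4}
    (hx : x = 0 ∨ x = 2) : x ∈ A := by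
  rcases hx with h | h <;> rw [h]
  · exact zero_mem A
  · exact h2

lemma isUnit_two_of_odd {n : ℕ} [NeZero n] (hodd : Odd n) : IsUnit (2 : ZMod n) := by
  have : ((2 : ℕ) : ZMod n) = (2 : ZMod n) := by push_cast; ring
  rw [← this, ZMod.isUnit_iff_coprime]
  exact Nat.coprime_two_left.mpr hodd

lemma eq_zero_of_two_mul_eq_zero {n : ℕ} [NeZero n] (hodd : Odd n) {x : ZMod n}
    (h : 2 * x = 0) : x = 0 := by
  have hu := isUnit_two_of_odd (n := n) hodd
  exact (IsUnit.mul_right_eq_zero hu).mp h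

end Classify

section MainCases

lemma DF1 : ∀ c x y : ZMod 4, (c = 0 ∨ c = 2) → (x + y - c = 0 ∨ x + y - c = 2) →
    (x - y = 0 ∨ x - y = 2) := by decide
lemma DF2 : ∀ c x y : ZMod 4, (c = 1 ∨ c = 3) →
    ((x - y = 0 ∨ x - y = 2) ∨ (x + y - c = 0 ∨ x + y - c = 2)) := by decide
lemma DF3 : ∀ z : ZMod 4, 2 * z = 0 → z = 0 ∨ z = 2 := by decide
lemma DF4 : ∀ c : ZMod 4, (c = 0 ∨ c = 2) ∨ (c = 1 ∨ c = 3) := by decide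

lemma exists_nontrivial {L : Subgroup (Equiv.Perm (ZMod r × ZMod s))} [NeZero r] [NeZero s]
    (hN : NormalIn L (Ggroup r s)) (hL : L ≠ ⊥)
    (hu : IsUnit (2 : ZMod r) ∨ IsUnit (2 : ZMod s))
    (hrefl : ∀ c d, rf r s c d ∉ L) :
    (∃ a ∈ Asub L, a ≠ 0) ∨ (∃ b ∈ Bsub L, b ≠ 0) := by
  rcases Subgroup.bot_or_exists_ne_one L with h | ⟨g, hg, hne⟩
  · exact absurd h hL
  rcases mem_G_cases (hN.1 hg) with ⟨a, b, rfl⟩ | ⟨c, d, rfl⟩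
  · obtain ⟨ha, hb⟩ := decouple hN hu hg
    by_cases haz : a = 0
    · right
      refine ⟨b, hb, ?_⟩
      rintro rfl
      rw [haz] at hne
      exact hne tr_zero
    · exact Or.inl ⟨a, ha, haz⟩
  · exact absurd hg (hrefl c d)

lemma card_le_one {L : Subgroup (Equiv.Perm (ZMod r × ZMod s))}
    (h : ∀ x : ZMod r × ZMod s,
      Quotient.mk (orbitSetoid L) ((0 : ZMod r), (0 : ZMod s)) = Quotient.mk (orbitSetoid L) x) :
    Nat.card (Quotient (orbitSetoid L)) ≤ 2 := by
  have := card_le_master (L := L) (fun _ => (0 : ZMod 1)) (fun _ => ((0 : ZMod r), (0 : ZMod s)))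
    (fun x => h x)
  omega

/-- Shape `(p, q)`, both odd primes. -/
lemma part1_pq {r s : ℕ} (hrp : r.Prime) (hro : Odd r) (hsp : s.Prime) (hso : Odd s)
    (L : Subgroup (Equiv.Perm (ZMod r × ZMod s)))
    (hN : NormalIn L (Ggroup r s)) (hL : L ≠ ⊥) :
    Nat.card (Quotient (orbitSetoid L)) ≤ 2 ∨ IsoCycle (quotientGraph (Gamma r s) L) := by
  haveI : NeZero r := ⟨hrp.pos.ne'⟩
  haveI : NeZero s := ⟨hsp.pos.ne'⟩
  have hr3 : 3 ≤ r := by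
    have h2 := hrp.two_le; rcases Nat.odd_iff.mp hro  with h; omega
  have hs3 : 3 ≤ s := by
    have h2 := hsp.two_le; rcases Nat.odd_iff.mp hso with h; omega
  have hu : IsUnit (2 : ZMod r) ∨ IsUnit (2 : ZMod s) := Or.inl (isUnit_two_of_odd hro)
  by_cases hrefl : ∃ c d, rf r s c d ∈ L
  · obtain ⟨c, d, hcd⟩ := hrefl
    obtain ⟨h2A, h2d, -⟩ := refl_facts hN hu hcd
    have hA : ∀ x, x ∈ Asub L := mem_of_isUnit_mem (isUnit_two_of_odd hro) h2A
    have hrel := mkeq_R hN hu hcd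
    rcases classify_prime hsp (Bsub L) with hB | hB
    · exact Or.inl (card_le_one fun x => (hrel _ _).mpr (Or.inl ⟨hA _, hB _⟩))
    · have hd0 : d = 0 := eq_zero_of_two_mul_eq_zero hso (hB _ h2d)
      refine Or.inr ⟨s, hs3, iso_snd hr3 hs3 ?_⟩
      intro x y
      rw [hrel x y]
      constructor
      · rintro (⟨-, hb⟩ | ⟨-, hb⟩)
        · exact sub_eq_zero.mp (hB _ hb)
        · rw [hd0, sub_zero] at hb
          exact sub_eq_zero.mp (hB _ hb)
      · intro h2
        exact Or.inl ⟨hA _, by rw [h2, sub_self]; exact zero_mem _⟩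
  · push_neg at hrefl
    have hrel := mkeq_T hN hu hrefl
    have hex := exists_nontrivial hN hL hu hrefl
    rcases classify_prime hrp (Asub L) with hA | hA <;>
      rcases classify_prime hsp (Bsub L) with hB | hB
    · exact Or.inl (card_le_one fun x => (hrel _ _).mpr ⟨hA _, hB _⟩)
    · refine Or.inr ⟨s, hs3, iso_snd hr3 hs3 ?_⟩
      intro x y
      rw [hrel x y]
      constructor
      · rintro ⟨-, hb⟩
        exact sub_eq_zero.mp (hB _ hb)
      · intro h2
        exact ⟨hA _, by rw [h2, sub_self]; exact zero_mem _⟩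
    · refine Or.inr ⟨r, hr3, iso_fst hr3 hs3 ?_⟩
      intro x y
      rw [hrel x y]
      constructor
      · rintro ⟨ha, -⟩
        exact sub_eq_zero.mp (hA _ ha)
      · intro h2
        exact ⟨by rw [h2, sub_self]; exact zero_mem _, hB _⟩
    · exfalso
      rcases hex with ⟨a, ha, hane⟩ | ⟨b, hb, hbne⟩
      · exact hane (hA _ ha)
      · exact hbne (hB _ hb)

end MainCases

/-- Shape `(p, 4)`. -/
lemma part1_p4 {r : ℕ} (hrp : r.Prime) (hro : Odd r)
    (L : Subgroup (Equiv.Perm (ZMod r × ZMod 4)))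
    (hN : NormalIn L (Ggroup r 4)) (hL : L ≠ ⊥) :
    Nat.card (Quotient (orbitSetoid L)) ≤ 2 ∨ IsoCycle (quotientGraph (Gamma r 4) L) := by
  haveI : NeZero r := ⟨hrp.pos.ne'⟩
  have hr3 : 3 ≤ r := by
    have h2 := hrp.two_le; rcases Nat.odd_iff.mp hro with h; omega
  have hu : IsUnit (2 : ZMod r) ∨ IsUnit (2 : ZMod 4) := Or.inl (isUnit_two_of_odd hro)
  -- small-quotient helper via parity of the second coordinate
  have small2 : ∀ (hglue : ∀ x : ZMod r × ZMod 4,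
      Quotient.mk (orbitSetoid L) ((0 : ZMod r), ((c42 x.2).val : ZMod 4)) =
        Quotient.mk (orbitSetoid L) x),
      Nat.card (Quotient (orbitSetoid L)) ≤ 2 := by
    intro hglue
    have := card_le_master (L := L) (fun x => c42 x.2)
      (fun v => ((0 : ZMod r), (v.val : ZMod 4))) (fun x => by
        have h := hglue x
        simpa [c42_sec] using h)
    omega
  by_cases hrefl : ∃ c d, rf r 4 c d ∈ L
  · obtain ⟨c, d, hcd⟩ := hrefl
    obtain ⟨h2A, h2d, -⟩ := refl_facts hN hu hcd
    have hA : ∀ x, x ∈ Asub L := mem_of_isUnit_mem (isUnit_two_of_odd hro) h2A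
    have hrel := mkeq_R hN hu hcd
    rcases classify_four (Bsub L) with hB | hB
    · exact Or.inl (card_le_one fun x => (hrel _ _).mpr (Or.inl ⟨hA _, hB _⟩))
    · by_cases h2B : (2 : ZMod 4) ∈ Bsub L
      · -- B = {0,2} : at most 2 classes
        left
        refine small2 fun x => (hrel _ _).mpr (Or.inl ⟨hA _, ?_⟩)
        exact mem_of_02 h2B (c42_sub x.2)
      · -- B = {0}
        have hB0 : ∀ b ∈ Bsub L, b = 0 := by
          intro b hb
          rcases hB b hb with h | h
          · exact h
          · exact absurd (h ▸ hb) h2B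
        rcases DF3 d (hB0 _ h2d) with hd | hd
        · -- d = 0 : quotient is C_4
          refine Or.inr ⟨4, by omega, iso_snd hr3 (by omega) ?_⟩
          intro x y
          rw [hrel x y]
          constructor
          · rintro (⟨-, hb⟩ | ⟨-, hb⟩)
            · exact sub_eq_zero.mp (hB0 _ hb)
            · rw [hd, sub_zero] at hb
              exact sub_eq_zero.mp (hB0 _ hb)
          · intro h2
            exact Or.inl ⟨hA _, by rw [h2, sub_self]; exact zero_mem _⟩
        · -- d = 2 : at most 2 classes
          left
          refine small2 fun x => (hrel _ _).mpr ?_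
          rcases c42_sub x.2 with h | h
          · exact Or.inl ⟨hA _, by rw [h]; exact zero_mem _⟩
          · refine Or.inr ⟨hA _, ?_⟩
            rw [hd]
            have : ((c42 x.2).val : ZMod 4) - x.2 - 2 = 0 := by rw [h]; ring
            rw [this]
            exact zero_mem _
  · push_neg at hrefl
    have hrel := mkeq_T hN hu hrefl
    have hex := exists_nontrivial hN hL hu hrefl
    rcases classify_prime hrp (Asub L) with hA | hA
    · rcases classify_four (Bsub L) with hB | hB
      · exact Or.inl (card_le_one fun x => (hrel _ _).mpr ⟨hA _, hB _⟩)
      · by_cases h2B : (2 : ZMod 4) ∈ Bsub L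
        · left
          exact small2 fun x => (hrel _ _).mpr ⟨hA _, mem_of_02 h2B (c42_sub x.2)⟩
        · have hB0 : ∀ b ∈ Bsub L, b = 0 := by
            intro b hb
            rcases hB b hb with h | h
            · exact h
            · exact absurd (h ▸ hb) h2B
          refine Or.inr ⟨4, by omega, iso_snd hr3 (by omega) ?_⟩
          intro x y
          rw [hrel x y]
          constructor
          · rintro ⟨-, hb⟩
            exact sub_eq_zero.mp (hB0 _ hb)
          · intro h2
            exact ⟨hA _, by rw [h2, sub_self]; exact zero_mem _⟩
    · rcases classify_four (Bsub L) with hB | hB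
      · refine Or.inr ⟨r, hr3, iso_fst hr3 (by omega) ?_⟩
        intro x y
        rw [hrel x y]
        constructor
        · rintro ⟨ha, -⟩
          exact sub_eq_zero.mp (hA _ ha)
        · intro h2
          exact ⟨by rw [h2, sub_self]; exact zero_mem _, hB _⟩
      · by_cases h2B : (2 : ZMod 4) ∈ Bsub L
        · -- C_{2r}
          refine Or.inr ⟨r * 2, by omega, iso_crt_snd hr3 hro ?_⟩
          intro x y
          rw [hrel x y]
          constructor
          · rintro ⟨ha, hb⟩
            exact ⟨sub_eq_zero.mp (hA _ ha), hB _ hb⟩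
          · rintro ⟨h1, h2⟩
            exact ⟨by rw [h1, sub_self]; exact zero_mem _, mem_of_02 h2B h2⟩
        · have hB0 : ∀ b ∈ Bsub L, b = 0 := by
            intro b hb
            rcases hB b hb with h | h
            · exact h
            · exact absurd (h ▸ hb) h2B
          exfalso
          rcases hex with ⟨a, ha, hane⟩ | ⟨b, hb, hbne⟩
          · exact hane (hA _ ha)
          · exact hbne (hB0 _ hb)

/-- Shape `(4, p)`. -/
lemma part1_4p {s : ℕ} (hsp : s.Prime) (hso : Odd s)
    (L : Subgroup (Equiv.Perm (ZMod 4 × ZMod s)))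
    (hN : NormalIn L (Ggroup 4 s)) (hL : L ≠ ⊥) :
    Nat.card (Quotient (orbitSetoid L)) ≤ 2 ∨ IsoCycle (quotientGraph (Gamma 4 s) L) := by
  haveI : NeZero s := ⟨hsp.pos.ne'⟩
  have hs3 : 3 ≤ s := by
    have h2 := hsp.two_le; rcases Nat.odd_iff.mp hso with h; omega
  have hu : IsUnit (2 : ZMod 4) ∨ IsUnit (2 : ZMod s) := Or.inr (isUnit_two_of_odd hso)
  have small2 : ∀ (hglue : ∀ x : ZMod 4 × ZMod s,
      Quotient.mk (orbitSetoid L) (((c42 x.1).val : ZMod 4), (0 : ZMod s)) =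
        Quotient.mk (orbitSetoid L) x),
      Nat.card (Quotient (orbitSetoid L)) ≤ 2 := by
    intro hglue
    have := card_le_master (L := L) (fun x => c42 x.1)
      (fun v => ((v.val : ZMod 4), (0 : ZMod s))) (fun x => by
        have h := hglue x
        simpa [c42_sec] using h)
    omega
  by_cases hrefl : ∃ c d, rf 4 s c d ∈ L
  · obtain ⟨c, d, hcd⟩ := hrefl
    obtain ⟨h2A, h2d, -⟩ := refl_facts hN hu hcd
    have hrel := mkeq_R hN hu hcd
    rcases classify_four (Asub L) with hA | hA
    · -- A = all
      rcases classify_prime hsp (Bsub L) with hB | hB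
      · exact Or.inl (card_le_one fun x => (hrel _ _).mpr (Or.inl ⟨hA _, hB _⟩))
      · have hd0 : d = 0 := eq_zero_of_two_mul_eq_zero hso (hB _ h2d)
        refine Or.inr ⟨s, hs3, iso_snd (by omega) hs3 ?_⟩
        intro x y
        rw [hrel x y]
        constructor
        · rintro (⟨-, hb⟩ | ⟨-, hb⟩)
          · exact sub_eq_zero.mp (hB _ hb)
          · rw [hd0, sub_zero] at hb
            exact sub_eq_zero.mp (hB _ hb)
        · intro h2
          exact Or.inl ⟨hA _, by rw [h2, sub_self]; exact zero_mem _⟩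
    · -- A ⊆ {0,2}, with 2 ∈ A
      rcases classify_prime hsp (Bsub L) with hB | hB
      · -- B full : at most 2 classes
        left
        refine small2 fun x => (hrel _ _).mpr (Or.inl ⟨?_, hB _⟩)
        exact mem_of_02 h2A (c42_sub x.1)
      · -- B trivial
        have hd0 : d = 0 := eq_zero_of_two_mul_eq_zero hso (hB _ h2d)
        rcases DF4 c with hc | hc
        · -- c even : C_{2s}
          refine Or.inr ⟨2 * s, by omega, iso_crt_fst hs3 hso ?_⟩
          intro x y
          rw [hrel x y]
          constructor
          · rintro (⟨ha, hb⟩ | ⟨ha, hb⟩)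
            · exact ⟨hA _ ha, sub_eq_zero.mp (hB _ hb)⟩
            · refine ⟨DF1 c x.1 y.1 hc (hA _ ha), ?_⟩
              rw [hd0, sub_zero] at hb
              exact sub_eq_zero.mp (hB _ hb)
          · rintro ⟨h1, h2⟩
            exact Or.inl ⟨mem_of_02 h2A h1, by rw [h2, sub_self]; exact zero_mem _⟩
        · -- c odd : C_s
          refine Or.inr ⟨s, hs3, iso_snd (by omega) hs3 ?_⟩
          intro x y
          rw [hrel x y]
          constructor
          · rintro (⟨-, hb⟩ | ⟨-, hb⟩)
            · exact sub_eq_zero.mp (hB _ hb)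
            · rw [hd0, sub_zero] at hb
              exact sub_eq_zero.mp (hB _ hb)
          · intro h2
            rcases DF2 c x.1 y.1 hc with h | h
            · exact Or.inl ⟨mem_of_02 h2A h, by rw [h2, sub_self]; exact zero_mem _⟩
            · refine Or.inr ⟨mem_of_02 h2A h, ?_⟩
              rw [hd0, sub_zero, h2, sub_self]
              exact zero_mem _
  · push_neg at hrefl
    have hrel := mkeq_T hN hu hrefl
    have hex := exists_nontrivial hN hL hu hrefl
    rcases classify_four (Asub L) with hA | hA
    · rcases classify_prime hsp (Bsub L) with hB | hB
      · exact Or.inl (card_le_one fun x => (hrel _ _).mpr ⟨hA _, hB _⟩)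
      · refine Or.inr ⟨s, hs3, iso_snd (by omega) hs3 ?_⟩
        intro x y
        rw [hrel x y]
        constructor
        · rintro ⟨-, hb⟩
          exact sub_eq_zero.mp (hB _ hb)
        · intro h2
          exact ⟨hA _, by rw [h2, sub_self]; exact zero_mem _⟩
    · by_cases h2A : (2 : ZMod 4) ∈ Asub L
      · rcases classify_prime hsp (Bsub L) with hB | hB
        · left
          exact small2 fun x => (hrel _ _).mpr ⟨mem_of_02 h2A (c42_sub x.1), hB _⟩
        · -- C_{2s}
          refine Or.inr ⟨2 * s, by omega, iso_crt_fst hs3 hso ?_⟩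
          intro x y
          rw [hrel x y]
          constructor
          · rintro ⟨ha, hb⟩
            exact ⟨hA _ ha, sub_eq_zero.mp (hB _ hb)⟩
          · rintro ⟨h1, h2⟩
            exact ⟨mem_of_02 h2A h1, by rw [h2, sub_self]; exact zero_mem _⟩
      · have hA0 : ∀ a ∈ Asub L, a = 0 := by
          intro a ha
          rcases hA a ha with h | h
          · exact h
          · exact absurd (h ▸ ha) h2A
        rcases classify_prime hsp (Bsub L) with hB | hB
        · refine Or.inr ⟨4, by omega, iso_fst (by omega) hs3 ?_⟩
          intro x y
          rw [hrel x y]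
          constructor
          · rintro ⟨ha, -⟩
            exact sub_eq_zero.mp (hA0 _ ha)
          · intro h2
            exact ⟨by rw [h2, sub_self]; exact zero_mem _, hB _⟩
        · exfalso
          rcases hex with ⟨a, ha, hane⟩ | ⟨b, hb, hbne⟩
          · exact hane (hA0 _ ha)
          · exact hbne (hB _ hb)

section NuMu
variable [NeZero r] [NeZero s]

lemma tr_pow_snd (n : ℕ) : (tr r s 0 1) ^ n = tr r s 0 (n : ZMod s) := by
  induction n with
  | zero => simp
  | succ n ih => rw [pow_succ, ih, tr_mul_tr]; push_cast; ring_nf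

lemma mem_closure_nu {g : Equiv.Perm (ZMod r × ZMod s)}
    (hg : g ∈ Subgroup.closure {nu r s}) : ∃ b, g = tr r s 0 b := by
  induction hg using Subgroup.closure_induction with
  | mem g hg =>
    rw [Set.mem_singleton_iff] at hg
    exact ⟨1, by rw [hg, nu_eq]⟩
  | one => exact ⟨0, tr_zero.symm⟩
  | mul g h _ _ ihg ihh =>
    obtain ⟨b, rfl⟩ := ihg
    obtain ⟨b', rfl⟩ := ihh
    exact ⟨b + b', by rw [tr_mul_tr, add_zero]⟩
  | inv g _ ihg =>
    obtain ⟨b, rfl⟩ := ihg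
    exact ⟨-b, by rw [tr_inv, neg_zero]⟩

lemma mem_closure_mu {g : Equiv.Perm (ZMod r × ZMod s)}
    (hg : g ∈ Subgroup.closure {mu r s}) : ∃ a, g = tr r s a 0 := by
  induction hg using Subgroup.closure_induction with
  | mem g hg =>
    rw [Set.mem_singleton_iff] at hg
    exact ⟨1, by rw [hg, mu_eq]⟩
  | one => exact ⟨0, tr_zero.symm⟩
  | mul g h _ _ ihg ihh =>
    obtain ⟨a, rfl⟩ := ihg
    obtain ⟨a', rfl⟩ := ihh
    exact ⟨a + a', by rw [tr_mul_tr, add_zero]⟩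
  | inv g _ ihg =>
    obtain ⟨a, rfl⟩ := ihg
    exact ⟨-a, by rw [tr_inv, neg_zero]⟩

set_option maxHeartbeats 1000000 in
lemma mkeq_nu (x y : ZMod r × ZMod s) :
    Quotient.mk (orbitSetoid (Subgroup.closure {nu r s})) x =
      Quotient.mk (orbitSetoid (Subgroup.closure {nu r s})) y ↔ x.1 = y.1 := by
  rw [mkeq_iff]
  constructor
  · rintro ⟨g, hg, rfl⟩
    obtain ⟨b, rfl⟩ := mem_closure_nu hg
    simp
  · intro h
    refine ⟨(nu r s) ^ (x.2 - y.2).val, pow_mem (Subgroup.subset_closure (Set.mem_singleton _)) _, ?_⟩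
    rw [nu_eq, tr_pow_snd, ZMod.natCast_rightInverse _]
    refine Prod.ext ?_ ?_ <;> simp [h.symm] <;> ring

lemma tr_pow_fst' (n : ℕ) : (tr r s 1 0) ^ n = tr r s (n : ZMod r) 0 := tr_pow_fst n

set_option maxHeartbeats 1000000 in
lemma mkeq_mu (x y : ZMod r × ZMod s) :
    Quotient.mk (orbitSetoid (Subgroup.closure {mu r s})) x =
      Quotient.mk (orbitSetoid (Subgroup.closure {mu r s})) y ↔ x.2 = y.2 := by
  rw [mkeq_iff]
  constructor
  · rintro ⟨g, hg, rfl⟩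
    obtain ⟨a, rfl⟩ := mem_closure_mu hg
    simp
  · intro h
    refine ⟨(mu r s) ^ (x.1 - y.1).val, pow_mem (Subgroup.subset_closure (Set.mem_singleton _)) _, ?_⟩
    rw [mu_eq, tr_pow_fst, ZMod.natCast_rightInverse _]
    refine Prod.ext ?_ ?_ <;> simp [h.symm] <;> ring

lemma normalIn_closure_nu : NormalIn (Subgroup.closure {nu r s}) (Ggroup r s) := by
  constructor
  · rw [Subgroup.closure_le]
    intro g hg
    rw [Set.mem_singleton_iff] at hg
    subst hg
    rw [nu_eq]
    exact tr_mem_G 0 1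
  · intro h hh n hn
    obtain ⟨b, rfl⟩ := mem_closure_nu hn
    have : h * tr r s 0 b * h⁻¹ = tr r s 0 b := by
      rcases mem_G_cases hh with ⟨a, b', rfl⟩ | ⟨c, d, rfl⟩
      · rw [tr_inv, tr_mul_tr, tr_mul_tr]
        congr 1 <;> ring
      · rw [rf_inv, rf_mul_tr, rf_mul_rf]
        congr 1 <;> ring
    rw [this]
    exact hn

lemma closure_nu_ne_bot (hs1 : (1 : ZMod s) ≠ 0) :
    Subgroup.closure {nu r s} ≠ (⊥ : Subgroup (Equiv.Perm (ZMod r × ZMod s))) := by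
  intro h
  have hmem : nu r s ∈ Subgroup.closure {nu r s} := Subgroup.subset_closure rfl
  rw [h, Subgroup.mem_bot] at hmem
  have := congrArg (fun g : Equiv.Perm (ZMod r × ZMod s) => (g ((0 : ZMod r), (0 : ZMod s))).2) hmem
  simp [nu] at this
  exact hs1 this

end NuMu

end AuxOG4

/-- for `(r,s)` of the form `(4,p)`, `(p,4)` or `(p,q)` with `p`, `q` odd primes,
every normal quotient of `(Γ(r,s), G(r,s))` by a nontrivial normal subgroup is degenerate,
the quotient by `⟨ν⟩` is `C_r`, the quotient by `⟨μ⟩` is `C_s`, and the pair is basic of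
cycle type. -/
theorem stmt5 (r s : ℕ)
    (h : (r = 4 ∧ s.Prime ∧ Odd s) ∨ (r.Prime ∧ Odd r ∧ s = 4) ∨
      (r.Prime ∧ Odd r ∧ s.Prime ∧ Odd s)) :
    (∀ L : Subgroup (Equiv.Perm (ZMod r × ZMod s)), NormalIn L (Ggroup r s) → L ≠ ⊥ →
      Nat.card (Quotient (orbitSetoid L)) ≤ 2 ∨ IsoCycle (quotientGraph (Gamma r s) L)) ∧
    Nonempty (quotientGraph (Gamma r s) (Subgroup.closure {nu r s}) ≃g
      SimpleGraph.cycleGraph r) ∧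
    Nonempty (quotientGraph (Gamma r s) (Subgroup.closure {mu r s}) ≃g
      SimpleGraph.cycleGraph s) ∧
    BasicOfCycleType (Gamma r s) (Ggroup r s) := by
  have hr3 : 3 ≤ r := by
    rcases h with ⟨h1, h2, h3⟩ | ⟨h1, h2, h3⟩ | ⟨h1, h2, h3, h4⟩
    · omega
    · have := h1.two_le; rcases Nat.odd_iff.mp h2 with h'; omega
    · have := h1.two_le; rcases Nat.odd_iff.mp h2 with h'; omega
  have hs3 : 3 ≤ s := by
    rcases h with ⟨h1, h2, h3⟩ | ⟨h1, h2, h3⟩ | ⟨h1, h2, h3, h4⟩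
    · have := h2.two_le; rcases Nat.odd_iff.mp h3 with h'; omega
    · omega
    · have := h3.two_le; rcases Nat.odd_iff.mp h4 with h'; omega
  haveI : NeZero r := ⟨by omega⟩
  haveI : NeZero s := ⟨by omega⟩
  have part1 : ∀ L : Subgroup (Equiv.Perm (ZMod r × ZMod s)),
      NormalIn L (Ggroup r s) → L ≠ ⊥ →
      Nat.card (Quotient (orbitSetoid L)) ≤ 2 ∨ IsoCycle (quotientGraph (Gamma r s) L) := by
    intro L hN hL
    rcases h with ⟨h1, h2, h3⟩ | ⟨h1, h2, h3⟩ | ⟨h1, h2, h3, h4⟩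
    · subst h1; exact part1_4p h2 h3 L hN hL
    · subst h3; exact part1_p4 h1 h2 L hN hL
    · exact part1_pq h1 h2 h3 h4 L hN hL
  have part2 : Nonempty (quotientGraph (Gamma r s) (Subgroup.closure {nu r s}) ≃g
      SimpleGraph.cycleGraph r) := iso_fst hr3 hs3 mkeq_nu
  have part3 : Nonempty (quotientGraph (Gamma r s) (Subgroup.closure {mu r s}) ≃g
      SimpleGraph.cycleGraph s) := iso_snd hr3 hs3 mkeq_mu
  have hs1 : (1 : ZMod s) ≠ 0 := by
    haveI : Fact (1 < s) := ⟨by omega⟩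
    exact one_ne_zero
  exact ⟨part1, part2, part3, part1,
    ⟨Subgroup.closure {nu r s}, normalIn_closure_nu, closure_nu_ne_bot hs1,
      ⟨r, hr3, part2⟩⟩⟩

end OG4
end

section
/- Let r = p and s = q where p and q are odd primes (not necessarily distinct). Then for every nontrivial normal subgroup L of G₂(p,q), the normal quotient Γ₂(p,q)_L either has at most 2 vertices or is isomorphic to a cycle graph C_m for some m ≥ 3; moreover the normal quotient of Γ₂(p,q) by ⟨μ⟩ is isomorphic to the cycle C_{2q} and the normal quotient by ⟨ν⟩ is isomorphic to the cycle C_{2p}. In particular, (Γ₂(p,q), G₂(p,q)) is basic of cycle type. -/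
open SimpleGraph

namespace OG4

variable {V : Type*} {W : Type*}

section AuxPerm

variable {p q : ℕ}

/-- sign permutation -/
def sgnE (r : ℕ) (ε : Bool) : Equiv.Perm (ZMod r) := if ε then Equiv.refl _ else Equiv.neg _

/-- affine permutation -/
def affE (r : ℕ) (ε : Bool) (a : ZMod r) : Equiv.Perm (ZMod r) :=
  (sgnE r ε).trans (Equiv.addRight a)

lemma affE_apply (r : ℕ) (ε : Bool) (a x : ZMod r) :
    affE r ε a x = (if ε then x else -x) + a := by
  cases ε <;> simp [affE, sgnE]

/-- The general element of `G₂`. -/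
def permE (p q : ℕ) (a : ZMod p) (b : ZMod q) (ε c : Bool) :
    Equiv.Perm ((ZMod p × ZMod q) × ZMod 2) :=
  ((affE p ε a).prodCongr (affE q (ε != c) b)).prodCongr
    (Equiv.addRight (if c then 1 else 0))

lemma permE_apply (a : ZMod p) (b : ZMod q) (ε c : Bool) (x : (ZMod p × ZMod q) × ZMod 2) :
    permE p q a b ε c x =
      (((if ε then x.1.1 else -x.1.1) + a, (if (ε != c) then x.1.2 else -x.1.2) + b),
        x.2 + (if c then 1 else 0)) := by
  cases ε <;> cases c <;> simp [permE, affE_apply, Prod.map]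

lemma permE_one : permE p q 0 0 true false = 1 := by
  apply Equiv.ext; rintro ⟨⟨i, j⟩, δ⟩
  simp [permE_apply]

lemma permE_mul (a a' : ZMod p) (b b' : ZMod q) (ε ε' c c' : Bool) :
    permE p q a' b' ε' c' * permE p q a b ε c =
      permE p q ((if ε' then a else -a) + a') ((if (ε' != c') then b else -b) + b')
        (ε == ε') (c != c') := by
  apply Equiv.ext; rintro ⟨⟨i, j⟩, δ⟩
  have h2 : (1 : ZMod 2) + 1 = 0 := by decide
  cases ε <;> cases ε' <;> cases c <;> cases c' <;>
    simp [permE_apply, Prod.ext_iff, add_assoc, h2] <;> and_intros <;> first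
    | trivial
    | ring

lemma permE_inv (a : ZMod p) (b : ZMod q) (ε c : Bool) :
    (permE p q a b ε c)⁻¹ =
      permE p q (if ε then -a else a) (if (ε != c) then -b else b) ε c := by
  rw [inv_eq_iff_mul_eq_one, permE_mul, ← permE_one]
  cases ε <;> cases c <;> simp

end AuxPerm

section AuxG2

variable {p q : ℕ}

lemma muD_eq : muD p q = permE p q 1 0 true false := by
  apply Equiv.ext; rintro ⟨⟨i, j⟩, δ⟩
  simp [muD, mu, permE_apply, Prod.map]

lemma nuD_eq : nuD p q = permE p q 0 1 true false := by
  apply Equiv.ext; rintro ⟨⟨i, j⟩, δ⟩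
  simp [nuD, nu, permE_apply, Prod.map]

lemma sigmaD_eq : sigmaD p q = permE p q 0 0 true true := by
  apply Equiv.ext; rintro ⟨⟨i, j⟩, δ⟩
  simp [sigmaD, permE_apply, Prod.map]

lemma tauD_eq : tauD p q = permE p q 0 0 false false := by
  apply Equiv.ext; rintro ⟨⟨i, j⟩, δ⟩
  simp [tauD, tau, permE_apply, Prod.map]

lemma muD_mem : muD p q ∈ G2group p q := Subgroup.subset_closure (by simp)
lemma nuD_mem : nuD p q ∈ G2group p q := Subgroup.subset_closure (by simp)
lemma sigmaD_mem : sigmaD p q ∈ G2group p q := Subgroup.subset_closure (by simp)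
lemma tauD_mem : tauD p q ∈ G2group p q := Subgroup.subset_closure (by simp)

lemma sigtau_eq : sigmaD p q * tauD p q = permE p q 0 0 false true := by
  rw [sigmaD_eq, tauD_eq, permE_mul]
  norm_num

lemma sigtauD_mem : permE p q 0 0 false true ∈ G2group p q :=
  sigtau_eq ▸ mul_mem sigmaD_mem tauD_mem

/-- The subgroup of all `permE`'s. -/
def permESet (p q : ℕ) : Subgroup (Equiv.Perm ((ZMod p × ZMod q) × ZMod 2)) where
  carrier := {g | ∃ a b ε c, g = permE p q a b ε c}
  one_mem' := ⟨0, 0, true, false, permE_one.symm⟩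
  mul_mem' := by
    rintro x y ⟨a, b, ε, c, rfl⟩ ⟨a', b', ε', c', rfl⟩
    exact ⟨_, _, _, _, permE_mul a' a b' b ε' ε c' c⟩
  inv_mem' := by
    rintro x ⟨a, b, ε, c, rfl⟩
    exact ⟨_, _, _, _, permE_inv a b ε c⟩

lemma mem_G2_form {g : Equiv.Perm ((ZMod p × ZMod q) × ZMod 2)} (hg : g ∈ G2group p q) :
    ∃ a b ε c, g = permE p q a b ε c := by
  have h : G2group p q ≤ permESet p q := by
    rw [G2group, Subgroup.closure_le]
    rintro x hx
    simp only [Set.mem_insert_iff, Set.mem_singleton_iff] at hx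
    rcases hx with rfl | rfl | rfl | rfl
    exacts [⟨_, _, _, _, muD_eq⟩, ⟨_, _, _, _, nuD_eq⟩, ⟨_, _, _, _, sigmaD_eq⟩,
      ⟨_, _, _, _, tauD_eq⟩]
  exact h hg

lemma permE_pow (a : ZMod p) (b : ZMod q) (n : ℕ) :
    (permE p q a b true false) ^ n = permE p q (n • a) (n • b) true false := by
  induction n with
  | zero => simp [permE_one]
  | succ n ih =>
    rw [pow_succ, ih, permE_mul]
    congr 1 <;> simp [succ_nsmul] <;> ring

lemma muD_pow_apply (n : ℕ) (x : (ZMod p × ZMod q) × ZMod 2) :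
    (muD p q ^ n) x = ((x.1.1 + n, x.1.2), x.2) := by
  rw [muD_eq, permE_pow, permE_apply]
  simp [nsmul_eq_mul]

lemma nuD_pow_apply (n : ℕ) (x : (ZMod p × ZMod q) × ZMod 2) :
    (nuD p q ^ n) x = ((x.1.1, x.1.2 + n), x.2) := by
  rw [nuD_eq, permE_pow, permE_apply]
  simp [nsmul_eq_mul]

lemma exists_add_natCast (r : ℕ) [NeZero r] (u v : ZMod r) : ∃ n : ℕ, u + (n : ZMod r) = v :=
  ⟨(v - u).val, by rw [ZMod.natCast_rightInverse (v - u)]; ring⟩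

lemma zmod2_flip {u v : ZMod 2} (h : u ≠ v) : v = u + 1 := by revert u v; decide

lemma zmod2_flip' {u v : ZMod 2} (h : u = v + 1) : v = u + 1 := by revert u v; decide

end AuxG2

section OrbitAux

lemma orbitRel_of {L : Subgroup (Equiv.Perm V)} {g : Equiv.Perm V} (hg : g ∈ L) (y : V) :
    (orbitSetoid L).r (g y) y :=
  show g y ∈ MulAction.orbit L y from MulAction.mem_orbit_iff.mpr ⟨⟨g, hg⟩, rfl⟩

lemma orbitRel_elim {L : Subgroup (Equiv.Perm V)} {x y : V}
    (h : (orbitSetoid L).r x y) : ∃ g ∈ L, g y = x := by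
  obtain ⟨⟨g, hg⟩, hgy⟩ := MulAction.mem_orbit_iff.mp h
  exact ⟨g, hg, hgy⟩

end OrbitAux

section CycleTool

/-- An additive equivalence `ZMod (k+3) ≃+ Fin (k+3)`. -/
def zmodFinEquiv (k : ℕ) : ZMod (k + 3) ≃+ Fin (k + 3) where
  toFun x := ⟨x.val, ZMod.val_lt x⟩
  invFun y := (y.val : ZMod (k + 3))
  left_inv x := ZMod.natCast_rightInverse x
  right_inv y := by
    apply Fin.ext
    simp [ZMod.val_natCast_of_lt y.isLt]
  map_add' x y := by
    apply Fin.ext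
    simp [ZMod.val_add, Fin.add_def]

lemma zmodFinEquiv_one (k : ℕ) : zmodFinEquiv k 1 = 1 := by
  haveI : Fact (1 < k + 3) := ⟨by omega⟩
  apply Fin.ext
  have h1 : ((1 : ZMod (k + 3)).val) = 1 := ZMod.val_one (k + 3)
  have h2 : ((1 : Fin (k + 3)).val) = 1 := by
    show (1 : Fin (k + 1 + 2)).val = 1
    simp
  simp only [zmodFinEquiv, AddEquiv.coe_mk, Equiv.coe_fn_mk]
  rw [h2]
  exact h1

lemma cycleGraph_adj_zmod {k : ℕ} (u v : ZMod (k + 3)) :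
    (SimpleGraph.cycleGraph (k + 3)).Adj (zmodFinEquiv k u) (zmodFinEquiv k v) ↔
      (u - v = 1 ∨ v - u = 1) := by
  have h : (SimpleGraph.cycleGraph (k + 1 + 2)).Adj (zmodFinEquiv k u) (zmodFinEquiv k v) ↔
      (zmodFinEquiv k u - zmodFinEquiv k v = 1 ∨ zmodFinEquiv k v - zmodFinEquiv k u = 1) :=
    SimpleGraph.cycleGraph_adj
  have key : ∀ w : ZMod (k + 3), (zmodFinEquiv k w = 1) ↔ w = 1 := by
    intro w
    rw [← zmodFinEquiv_one k]
    exact (zmodFinEquiv k).injective.eq_iff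
  rw [show (SimpleGraph.cycleGraph (k + 3)).Adj (zmodFinEquiv k u) (zmodFinEquiv k v) =
    (SimpleGraph.cycleGraph (k + 1 + 2)).Adj (zmodFinEquiv k u) (zmodFinEquiv k v) from rfl, h]
  rw [← map_sub, ← map_sub, key, key]

/-- The main tool: if the orbits of `L` are the fibers of a surjection onto `ZMod m`
compatible with adjacency, the quotient graph is the cycle `C_m`. -/
lemma iso_cycle_of {V : Type*} (Γ : SimpleGraph V) (L : Subgroup (Equiv.Perm V))
    (m : ℕ) (hm : 3 ≤ m) (f : V → ZMod m)
    (hinv : ∀ g ∈ L, ∀ x, f (g x) = f x)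
    (hjoin : ∀ x y, f x = f y → (orbitSetoid L).r x y)
    (hadj : ∀ x y, Γ.Adj x y → f y = f x + 1 ∨ f x = f y + 1)
    (hedge : ∀ z : ZMod m, ∃ x y, f x = z ∧ f y = z + 1 ∧ Γ.Adj x y) :
    Nonempty (quotientGraph Γ L ≃g SimpleGraph.cycleGraph m) := by
  obtain ⟨k, rfl⟩ : ∃ k, m = k + 3 := ⟨m - 3, by omega⟩
  haveI : Fact (1 < k + 3) := ⟨by omega⟩
  have hwd : ∀ x y : V, (orbitSetoid L).r x y → f x = f y := by
    intro x y h
    obtain ⟨g, hg, rfl⟩ := orbitRel_elim h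
    exact hinv g hg y
  let F : Quotient (orbitSetoid L) → ZMod (k + 3) := Quotient.lift f hwd
  have hFmk : ∀ x : V, F (Quotient.mk (orbitSetoid L) x) = f x := fun _ => rfl
  have hFsurj : Function.Surjective F := by
    intro z
    obtain ⟨x, y, hx, _, _⟩ := hedge z
    exact ⟨Quotient.mk _ x, hx⟩
  have hFinj : Function.Injective F := by
    intro a b
    induction a using Quotient.ind
    induction b using Quotient.ind
    intro h
    exact Quotient.sound (hjoin _ _ h)
  refine ⟨⟨(Equiv.ofBijective F ⟨hFinj, hFsurj⟩).trans (zmodFinEquiv k).toEquiv, ?_⟩⟩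
  intro a b
  obtain ⟨x, rfl⟩ := Quotient.exists_rep a
  obtain ⟨y, rfl⟩ := Quotient.exists_rep b
  show (SimpleGraph.cycleGraph (k + 3)).Adj (zmodFinEquiv k (f x)) (zmodFinEquiv k (f y)) ↔ _
  rw [cycleGraph_adj_zmod]
  constructor
  · rintro (h | h)
    · -- f x = f y + 1
      have hxy : f x = f y + 1 := by rw [← h]; ring
      obtain ⟨x', y', hx', hy', hadj'⟩ := hedge (f y)
      refine ⟨?_, Or.inl ⟨y', x', ?_, ?_, hadj'.symm⟩⟩
      · intro hab
        have hfeq : f x = f y := hwd _ _ (Quotient.exact hab)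
        rw [hfeq] at hxy
        exact one_ne_zero (left_eq_add.mp hxy)
      · exact Quotient.sound (hjoin _ _ (by rw [hy', ← hxy]))
      · exact Quotient.sound (hjoin _ _ (by rw [hx']))
    · -- f y = f x + 1
      have hxy : f y = f x + 1 := by rw [← h]; ring
      obtain ⟨x', y', hx', hy', hadj'⟩ := hedge (f x)
      refine ⟨?_, Or.inl ⟨x', y', ?_, ?_, hadj'⟩⟩
      · intro hab
        have hfeq : f x = f y := hwd _ _ (Quotient.exact hab)
        rw [← hfeq] at hxy
        exact one_ne_zero (left_eq_add.mp hxy)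
      · exact Quotient.sound (hjoin _ _ (by rw [hx']))
      · exact Quotient.sound (hjoin _ _ (by rw [hy', ← hxy]))
  · rintro ⟨hne, (⟨u, v, hu, hv, huv⟩ | ⟨u, v, hu, hv, huv⟩)⟩
    · have h1 : f u = f x := hwd _ _ (Quotient.exact hu)
      have h2 : f v = f y := hwd _ _ (Quotient.exact hv)
      rcases hadj u v huv with h | h
      · right; rw [← h1, ← h2, h]; ring
      · left; rw [← h1, ← h2, h]; ring
    · have h1 : f u = f y := hwd _ _ (Quotient.exact hu)
      have h2 : f v = f x := hwd _ _ (Quotient.exact hv)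
      rcases hadj u v huv with h | h
      · left; rw [← h1, ← h2, h]; ring
      · right; rw [← h1, ← h2, h]; ring

/-- Card bound tool. -/
lemma card_le_of {V W : Type*} [Finite W] (L : Subgroup (Equiv.Perm V)) (φ : V → W)
    (hinv : ∀ g ∈ L, ∀ x, φ (g x) = φ x)
    (hjoin : ∀ x y, φ x = φ y → (orbitSetoid L).r x y) :
    Nat.card (Quotient (orbitSetoid L)) ≤ Nat.card W := by
  have hwd : ∀ x y : V, (orbitSetoid L).r x y → φ x = φ y := by
    intro x y h
    obtain ⟨g, hg, rfl⟩ := orbitRel_elim h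
    exact hinv g hg y
  exact Nat.card_le_card_of_injective (Quotient.lift φ hwd)
    (by intro a b; induction a using Quotient.ind; induction b using Quotient.ind;
        intro h; exact Quotient.sound (hjoin _ _ h))

end CycleTool

section Identities

variable {p q : ℕ}

lemma id_conj_sigma (a : ZMod p) (b : ZMod q) :
    sigmaD p q * permE p q a b true false * (sigmaD p q)⁻¹ = permE p q a (-b) true false := by
  rw [sigmaD_eq, permE_inv, permE_mul, permE_mul]
  norm_num

lemma id_conj_sigtau (a : ZMod p) (b : ZMod q) :
    permE p q 0 0 false true * permE p q a b true false * (permE p q 0 0 false true)⁻¹ =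
      permE p q (-a) b true false := by
  rw [permE_inv, permE_mul, permE_mul]
  norm_num

lemma id_ds1 (a : ZMod p) (b : ZMod q) :
    permE p q a (-b) true false * permE p q a b true false = permE p q (a + a) 0 true false := by
  rw [permE_mul]
  norm_num

lemma id_ds2 (a : ZMod p) (b : ZMod q) :
    permE p q (-a) b true false * permE p q a b true false = permE p q 0 (b + b) true false := by
  rw [permE_mul]
  norm_num

lemma id_comm_nu_sigma (a : ZMod p) (b : ZMod q) :
    nuD p q * permE p q a b true true * (nuD p q)⁻¹ * (permE p q a b true true)⁻¹ =
      permE p q 0 (1 + 1) true false := by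
  rw [nuD_eq, permE_inv, permE_inv, permE_mul, permE_mul, permE_mul]
  norm_num
  congr 1
  ring

lemma id_sq_sigma (a : ZMod p) (b : ZMod q) :
    permE p q a b true true * permE p q a b true true = permE p q (a + a) 0 true false := by
  rw [permE_mul]
  norm_num

lemma id_comm_mu_sigtau (a : ZMod p) (b : ZMod q) :
    muD p q * permE p q a b false true * (muD p q)⁻¹ * (permE p q a b false true)⁻¹ =
      permE p q (1 + 1) 0 true false := by
  rw [muD_eq, permE_inv, permE_inv, permE_mul, permE_mul, permE_mul]
  norm_num
  congr 1
  ring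

lemma id_sq_sigtau (a : ZMod p) (b : ZMod q) :
    permE p q a b false true * permE p q a b false true = permE p q 0 (b + b) true false := by
  rw [permE_mul]
  norm_num

lemma id_comm_mu_tau (a : ZMod p) (b : ZMod q) :
    muD p q * permE p q a b false false * (muD p q)⁻¹ * (permE p q a b false false)⁻¹ =
      permE p q (1 + 1) 0 true false := by
  rw [muD_eq, permE_inv, permE_inv, permE_mul, permE_mul, permE_mul]
  norm_num
  congr 1
  ring

lemma id_comm_nu_tau (a : ZMod p) (b : ZMod q) :
    nuD p q * permE p q a b false false * (nuD p q)⁻¹ * (permE p q a b false false)⁻¹ =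
      permE p q 0 (1 + 1) true false := by
  rw [nuD_eq, permE_inv, permE_inv, permE_mul, permE_mul, permE_mul]
  norm_num
  congr 1
  ring

end Identities

section Derivations

variable {p q : ℕ} {L : Subgroup (Equiv.Perm ((ZMod p × ZMod q) × ZMod 2))}

lemma half_ne_zero {r : ℕ} (hr : r.Prime) (hro : Odd r) {a : ZMod r} (ha : a ≠ 0) :
    a + a ≠ 0 := by
  haveI : Fact r.Prime := ⟨hr⟩
  intro h
  have h2 : (2 : ZMod r) * a = 0 := by linear_combination h
  rcases mul_eq_zero.mp h2 with h2 | h2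
  · have hd : r ∣ 2 := by
      have h3 : ((2 : ℕ) : ZMod r) = 0 := by exact_mod_cast h2
      exact (ZMod.natCast_eq_zero_iff 2 r).mp h3
    have : r = 2 := (Nat.prime_dvd_prime_iff_eq hr Nat.prime_two).mp hd
    rw [this] at hro
    exact (by decide : ¬ Odd 2) hro
  · exact ha h2

lemma gen_mu (hp : p.Prime) {a : ZMod p}
    (h : permE p q a 0 true false ∈ L) (ha : a ≠ 0) : muD p q ∈ L := by
  haveI : Fact p.Prime := ⟨hp⟩
  have h1 := pow_mem h (a⁻¹).val
  rw [permE_pow] at h1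
  have e1 : ((a⁻¹).val : ℕ) • a = 1 := by
    rw [nsmul_eq_mul, ZMod.natCast_rightInverse a⁻¹, inv_mul_cancel₀ ha]
  rw [e1, smul_zero] at h1
  rw [muD_eq]
  exact h1

lemma gen_nu (hq : q.Prime) {b : ZMod q}
    (h : permE p q 0 b true false ∈ L) (hb : b ≠ 0) : nuD p q ∈ L := by
  haveI : Fact q.Prime := ⟨hq⟩
  have h1 := pow_mem h (b⁻¹).val
  rw [permE_pow] at h1
  have e1 : ((b⁻¹).val : ℕ) • b = 1 := by
    rw [nsmul_eq_mul, ZMod.natCast_rightInverse b⁻¹, inv_mul_cancel₀ hb]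
  rw [e1, smul_zero] at h1
  rw [nuD_eq]
  exact h1

lemma d_translation (hp : p.Prime) (hpo : Odd p) (hq : q.Prime) (hqo : Odd q)
    (hL : NormalIn L (G2group p q)) {a : ZMod p} {b : ZMod q}
    (h : permE p q a b true false ∈ L) :
    (a ≠ 0 → muD p q ∈ L) ∧ (b ≠ 0 → nuD p q ∈ L) := by
  constructor
  · intro ha
    have h1 := hL.2 _ sigmaD_mem _ h
    rw [id_conj_sigma] at h1
    have h2 := mul_mem h1 h
    rw [id_ds1] at h2
    exact gen_mu hp h2 (half_ne_zero hp hpo ha)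
  · intro hb
    have h1 := hL.2 _ sigtauD_mem _ h
    rw [id_conj_sigtau] at h1
    have h2 := mul_mem h1 h
    rw [id_ds2] at h2
    exact gen_nu hq h2 (half_ne_zero hq hqo hb)

lemma d_sigma (hp : p.Prime) (hpo : Odd p) (hq : q.Prime) (hqo : Odd q)
    (hL : NormalIn L (G2group p q)) {a : ZMod p} {b : ZMod q}
    (h : permE p q a b true true ∈ L) :
    nuD p q ∈ L ∧ (a ≠ 0 → muD p q ∈ L) := by
  haveI : Fact q.Prime := ⟨hq⟩
  constructor
  · have h1 := mul_mem (hL.2 _ nuD_mem _ h) (inv_mem h)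
    rw [id_comm_nu_sigma] at h1
    exact gen_nu hq h1 (half_ne_zero hq hqo one_ne_zero)
  · intro ha
    have h2 := mul_mem h h
    rw [id_sq_sigma] at h2
    exact gen_mu hp h2 (half_ne_zero hp hpo ha)

lemma d_sigtau (hp : p.Prime) (hpo : Odd p) (hq : q.Prime) (hqo : Odd q)
    (hL : NormalIn L (G2group p q)) {a : ZMod p} {b : ZMod q}
    (h : permE p q a b false true ∈ L) :
    muD p q ∈ L ∧ (b ≠ 0 → nuD p q ∈ L) := by
  haveI : Fact p.Prime := ⟨hp⟩
  constructor
  · have h1 := mul_mem (hL.2 _ muD_mem _ h) (inv_mem h)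
    rw [id_comm_mu_sigtau] at h1
    exact gen_mu hp h1 (half_ne_zero hp hpo one_ne_zero)
  · intro hb
    have h2 := mul_mem h h
    rw [id_sq_sigtau] at h2
    exact gen_nu hq h2 (half_ne_zero hq hqo hb)

lemma d_tau (hp : p.Prime) (hpo : Odd p) (hq : q.Prime) (hqo : Odd q)
    (hL : NormalIn L (G2group p q)) {a : ZMod p} {b : ZMod q}
    (h : permE p q a b false false ∈ L) :
    muD p q ∈ L ∧ nuD p q ∈ L := by
  haveI : Fact p.Prime := ⟨hp⟩
  haveI : Fact q.Prime := ⟨hq⟩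
  constructor
  · have h1 := mul_mem (hL.2 _ muD_mem _ h) (inv_mem h)
    rw [id_comm_mu_tau] at h1
    exact gen_mu hp h1 (half_ne_zero hp hpo one_ne_zero)
  · have h1 := mul_mem (hL.2 _ nuD_mem _ h) (inv_mem h)
    rw [id_comm_nu_tau] at h1
    exact gen_nu hq h1 (half_ne_zero hq hqo one_ne_zero)

end Derivations

section Scenarios

variable {p q : ℕ} {L : Subgroup (Equiv.Perm ((ZMod p × ZMod q) × ZMod 2))}

lemma zmod2_ne_succ (u : ZMod 2) : u ≠ u + 1 := by revert u; decide

lemma gamma2_adj_i {x y : (ZMod p × ZMod q) × ZMod 2} (h : (Gamma2 p q).Adj x y) :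
    y.1.1 = x.1.1 + 1 ∨ x.1.1 = y.1.1 + 1 := by
  rcases ((SimpleGraph.fromRel_adj _ x y).mp h).2 with ⟨hi, _, _⟩ | ⟨hi, _, _⟩
  · rcases hi with hi | hi
    · exact Or.inl hi
    · exact Or.inr (by rw [hi]; ring)
  · rcases hi with hi | hi
    · exact Or.inr hi
    · exact Or.inl (by rw [hi]; ring)

lemma gamma2_adj_j {x y : (ZMod p × ZMod q) × ZMod 2} (h : (Gamma2 p q).Adj x y) :
    y.1.2 = x.1.2 + 1 ∨ x.1.2 = y.1.2 + 1 := by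
  rcases ((SimpleGraph.fromRel_adj _ x y).mp h).2 with ⟨_, hj, _⟩ | ⟨_, hj, _⟩
  · rcases hj with hj | hj
    · exact Or.inl hj
    · exact Or.inr (by rw [hj]; ring)
  · rcases hj with hj | hj
    · exact Or.inr hj
    · exact Or.inl (by rw [hj]; ring)

lemma gamma2_adj_d {x y : (ZMod p × ZMod q) × ZMod 2} (h : (Gamma2 p q).Adj x y) :
    y.2 = x.2 + 1 := by
  rcases ((SimpleGraph.fromRel_adj _ x y).mp h).2 with ⟨_, _, hd⟩ | ⟨_, _, hd⟩
  · exact hd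
  · exact zmod2_flip' hd

lemma gamma2_adj_of {x y : (ZMod p × ZMod q) × ZMod 2}
    (h1 : y.1.1 = x.1.1 + 1) (h2 : y.1.2 = x.1.2 + 1) (h3 : y.2 = x.2 + 1) :
    (Gamma2 p q).Adj x y := by
  refine (SimpleGraph.fromRel_adj _ x y).mpr ⟨?_, Or.inl ⟨Or.inl h1, Or.inl h2, h3⟩⟩
  intro he
  rw [he] at h3
  exact zmod2_ne_succ y.2 h3

lemma permE_apply_snd (a : ZMod p) (b : ZMod q) (ε c : Bool) (x : (ZMod p × ZMod q) × ZMod 2) :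
    (permE p q a b ε c x).2 = x.2 + (if c then 1 else 0) := by
  rw [permE_apply]

/-- Scenario: quotient by `⟨μ⟩`-like subgroups is `C_{2q}`. -/
lemma scenario_c2q (hp : p.Prime) (hpo : Odd p) (hq : q.Prime) (hqo : Odd q)
    (hmu : muD p q ∈ L)
    (hfix : ∀ g ∈ L, ∀ x : (ZMod p × ZMod q) × ZMod 2,
      (g x).1.2 = x.1.2 ∧ (g x).2 = x.2) :
    Nonempty (quotientGraph (Gamma2 p q) L ≃g SimpleGraph.cycleGraph (2 * q)) := by
  haveI : Fact p.Prime := ⟨hp⟩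
  haveI : Fact q.Prime := ⟨hq⟩
  haveI : NeZero p := ⟨hp.pos.ne'⟩
  have hco : Nat.Coprime 2 q := hqo.coprime_two_left
  apply iso_cycle_of (Gamma2 p q) L (2 * q) (by have := hq.two_le; omega)
    (fun x => (ZMod.chineseRemainder hco).symm (x.2, x.1.2))
  · intro g hg x
    obtain ⟨h1, h2⟩ := hfix g hg x
    rw [h1, h2]
  · intro x y hxy
    have h0 : ((x.2, x.1.2) : ZMod 2 × ZMod q) = (y.2, y.1.2) :=
      (ZMod.chineseRemainder hco).symm.injective hxy
    have hd : x.2 = y.2 := (Prod.ext_iff.mp h0).1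
    have hj : x.1.2 = y.1.2 := (Prod.ext_iff.mp h0).2
    obtain ⟨n, hn⟩ := exists_add_natCast p y.1.1 x.1.1
    have hgx : (muD p q ^ n) y = x := by
      rw [muD_pow_apply]
      exact Prod.ext (Prod.ext hn hj.symm) hd.symm
    rw [← hgx]
    exact orbitRel_of (pow_mem hmu n) y
  · intro x y hadj
    have hj := gamma2_adj_j hadj
    have hd := gamma2_adj_d hadj
    rcases hj with hj | hj
    · left
      have he : ((y.2, y.1.2) : ZMod 2 × ZMod q) = (x.2, x.1.2) + 1 := by
        rw [hd, hj]; rfl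
      rw [he, map_add, map_one]
    · right
      have hd' : x.2 = y.2 + 1 := zmod2_flip' hd
      have he : ((x.2, x.1.2) : ZMod 2 × ZMod q) = (y.2, y.1.2) + 1 := by
        rw [hd', hj]; rfl
      rw [he, map_add, map_one]
  · intro z
    refine ⟨(((0 : ZMod p), ((ZMod.chineseRemainder hco) z).2), ((ZMod.chineseRemainder hco) z).1),
      (((1 : ZMod p), ((ZMod.chineseRemainder hco) z).2 + 1),
        ((ZMod.chineseRemainder hco) z).1 + 1), ?_, ?_, ?_⟩
    · show (ZMod.chineseRemainder hco).symm ((ZMod.chineseRemainder hco) z) = z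
      exact (ZMod.chineseRemainder hco).symm_apply_apply z
    · show (ZMod.chineseRemainder hco).symm ((ZMod.chineseRemainder hco) z + 1) = z + 1
      rw [map_add, map_one, RingEquiv.symm_apply_apply]
    · exact gamma2_adj_of (by simp) rfl rfl

/-- Scenario: quotient by `⟨ν⟩`-like subgroups is `C_{2p}`. -/
lemma scenario_c2p (hp : p.Prime) (hpo : Odd p) (hq : q.Prime) (hqo : Odd q)
    (hnu : nuD p q ∈ L)
    (hfix : ∀ g ∈ L, ∀ x : (ZMod p × ZMod q) × ZMod 2,
      (g x).1.1 = x.1.1 ∧ (g x).2 = x.2) :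
    Nonempty (quotientGraph (Gamma2 p q) L ≃g SimpleGraph.cycleGraph (2 * p)) := by
  haveI : Fact p.Prime := ⟨hp⟩
  haveI : Fact q.Prime := ⟨hq⟩
  haveI : NeZero q := ⟨hq.pos.ne'⟩
  have hco : Nat.Coprime 2 p := hpo.coprime_two_left
  apply iso_cycle_of (Gamma2 p q) L (2 * p) (by have := hp.two_le; omega)
    (fun x => (ZMod.chineseRemainder hco).symm (x.2, x.1.1))
  · intro g hg x
    obtain ⟨h1, h2⟩ := hfix g hg x
    rw [h1, h2]
  · intro x y hxy
    have h0 : ((x.2, x.1.1) : ZMod 2 × ZMod p) = (y.2, y.1.1) :=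
      (ZMod.chineseRemainder hco).symm.injective hxy
    have hd : x.2 = y.2 := (Prod.ext_iff.mp h0).1
    have hi : x.1.1 = y.1.1 := (Prod.ext_iff.mp h0).2
    obtain ⟨n, hn⟩ := exists_add_natCast q y.1.2 x.1.2
    have hgx : (nuD p q ^ n) y = x := by
      rw [nuD_pow_apply]
      exact Prod.ext (Prod.ext hi.symm hn) hd.symm
    rw [← hgx]
    exact orbitRel_of (pow_mem hnu n) y
  · intro x y hadj
    have hi := gamma2_adj_i hadj
    have hd := gamma2_adj_d hadj
    rcases hi with hi | hi
    · left
      have he : ((y.2, y.1.1) : ZMod 2 × ZMod p) = (x.2, x.1.1) + 1 := by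
        rw [hd, hi]; rfl
      rw [he, map_add, map_one]
    · right
      have hd' : x.2 = y.2 + 1 := zmod2_flip' hd
      have he : ((x.2, x.1.1) : ZMod 2 × ZMod p) = (y.2, y.1.1) + 1 := by
        rw [hd', hi]; rfl
      rw [he, map_add, map_one]
  · intro z
    refine ⟨((((ZMod.chineseRemainder hco) z).2, (0 : ZMod q)), ((ZMod.chineseRemainder hco) z).1),
      ((((ZMod.chineseRemainder hco) z).2 + 1, (1 : ZMod q)),
        ((ZMod.chineseRemainder hco) z).1 + 1), ?_, ?_, ?_⟩
    · show (ZMod.chineseRemainder hco).symm ((ZMod.chineseRemainder hco) z) = z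
      exact (ZMod.chineseRemainder hco).symm_apply_apply z
    · show (ZMod.chineseRemainder hco).symm ((ZMod.chineseRemainder hco) z + 1) = z + 1
      rw [map_add, map_one, RingEquiv.symm_apply_apply]
    · exact gamma2_adj_of rfl (by simp) rfl

/-- Scenario: orbits are the fibers of the first coordinate; quotient is `C_p`. -/
lemma scenario_cp (hp : p.Prime) (hpo : Odd p) (hq : q.Prime) (hqo : Odd q)
    (hnu : nuD p q ∈ L) {w : ZMod q} (hw : permE p q 0 w true true ∈ L)
    (hfix : ∀ g ∈ L, ∀ x : (ZMod p × ZMod q) × ZMod 2, (g x).1.1 = x.1.1) :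
    Nonempty (quotientGraph (Gamma2 p q) L ≃g SimpleGraph.cycleGraph p) := by
  haveI : Fact p.Prime := ⟨hp⟩
  haveI : Fact q.Prime := ⟨hq⟩
  haveI : NeZero q := ⟨hq.pos.ne'⟩
  have hp3 : 3 ≤ p := by
    have h2 := hp.two_le
    have : p ≠ 2 := by rintro rfl; exact (by decide : ¬ Odd 2) hpo
    omega
  apply iso_cycle_of (Gamma2 p q) L p hp3 (fun x => x.1.1)
  · intro g hg x
    exact hfix g hg x
  · intro x y hxy
    by_cases hd : x.2 = y.2
    · obtain ⟨n, hn⟩ := exists_add_natCast q y.1.2 x.1.2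
      have hgx : (nuD p q ^ n) y = x := by
        rw [nuD_pow_apply]
        exact Prod.ext (Prod.ext hxy.symm hn) hd.symm
      rw [← hgx]
      exact orbitRel_of (pow_mem hnu n) y
    · set u := permE p q 0 w true true y with hu
      have hu1 : u.1.1 = y.1.1 := hfix _ hw y
      have hu2 : u.2 = y.2 + 1 := by rw [hu, permE_apply_snd]; simp
      obtain ⟨n, hn⟩ := exists_add_natCast q u.1.2 x.1.2
      have hgx : (nuD p q ^ n * permE p q 0 w true true) y = x := by
        rw [Equiv.Perm.mul_apply, ← hu, nuD_pow_apply]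
        refine Prod.ext (Prod.ext ?_ hn) ?_
        · rw [hu1]; exact hxy.symm
        · rw [hu2]; exact (zmod2_flip (Ne.symm hd)).symm
      rw [← hgx]
      exact orbitRel_of (mul_mem (pow_mem hnu n) hw) y
  · intro x y hadj
    exact gamma2_adj_i hadj
  · intro z
    exact ⟨((z, 0), 0), ((z + 1, 1), 1), rfl, rfl, gamma2_adj_of rfl (by simp) (by simp)⟩

/-- Scenario: orbits are the fibers of the second coordinate; quotient is `C_q`. -/
lemma scenario_cq (hp : p.Prime) (hpo : Odd p) (hq : q.Prime) (hqo : Odd q)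
    (hmu : muD p q ∈ L) {w : ZMod p} (hw : permE p q w 0 false true ∈ L)
    (hfix : ∀ g ∈ L, ∀ x : (ZMod p × ZMod q) × ZMod 2, (g x).1.2 = x.1.2) :
    Nonempty (quotientGraph (Gamma2 p q) L ≃g SimpleGraph.cycleGraph q) := by
  haveI : Fact p.Prime := ⟨hp⟩
  haveI : Fact q.Prime := ⟨hq⟩
  haveI : NeZero p := ⟨hp.pos.ne'⟩
  have hq3 : 3 ≤ q := by
    have h2 := hq.two_le
    have : q ≠ 2 := by rintro rfl; exact (by decide : ¬ Odd 2) hqo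
    omega
  apply iso_cycle_of (Gamma2 p q) L q hq3 (fun x => x.1.2)
  · intro g hg x
    exact hfix g hg x
  · intro x y hxy
    by_cases hd : x.2 = y.2
    · obtain ⟨n, hn⟩ := exists_add_natCast p y.1.1 x.1.1
      have hgx : (muD p q ^ n) y = x := by
        rw [muD_pow_apply]
        exact Prod.ext (Prod.ext hn hxy.symm) hd.symm
      rw [← hgx]
      exact orbitRel_of (pow_mem hmu n) y
    · set u := permE p q w 0 false true y with hu
      have hu1 : u.1.2 = y.1.2 := hfix _ hw y
      have hu2 : u.2 = y.2 + 1 := by rw [hu, permE_apply_snd]; simp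
      obtain ⟨n, hn⟩ := exists_add_natCast p u.1.1 x.1.1
      have hgx : (muD p q ^ n * permE p q w 0 false true) y = x := by
        rw [Equiv.Perm.mul_apply, ← hu, muD_pow_apply]
        refine Prod.ext (Prod.ext hn ?_) ?_
        · rw [hu1]; exact hxy.symm
        · rw [hu2]; exact (zmod2_flip (Ne.symm hd)).symm
      rw [← hgx]
      exact orbitRel_of (mul_mem (pow_mem hmu n) hw) y
  · intro x y hadj
    exact gamma2_adj_j hadj
  · intro z
    exact ⟨((0, z), 0), ((1, z + 1), 1), rfl, rfl, gamma2_adj_of (by simp) rfl (by simp)⟩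

/-- Scenario: orbits are the fibers of `δ`; at most `2` orbits. -/
lemma scenario_two (hp : p.Prime) (hq : q.Prime)
    (hmu : muD p q ∈ L) (hnu : nuD p q ∈ L)
    (hfix : ∀ g ∈ L, ∀ x : (ZMod p × ZMod q) × ZMod 2, (g x).2 = x.2) :
    Nat.card (Quotient (orbitSetoid L)) ≤ 2 := by
  haveI : NeZero p := ⟨hp.pos.ne'⟩
  haveI : NeZero q := ⟨hq.pos.ne'⟩
  have h := card_le_of L (fun x => x.2) hfix ?_
  · rwa [Nat.card_zmod] at h
  · intro x y hxy
    obtain ⟨m, hm⟩ := exists_add_natCast p y.1.1 x.1.1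
    obtain ⟨n, hn⟩ := exists_add_natCast q y.1.2 x.1.2
    have hgx : (muD p q ^ m * nuD p q ^ n) y = x := by
      rw [Equiv.Perm.mul_apply, nuD_pow_apply, muD_pow_apply]
      exact Prod.ext (Prod.ext hm hn) hxy.symm
    rw [← hgx]
    exact orbitRel_of (mul_mem (pow_mem hmu m) (pow_mem hnu n)) y

/-- Scenario: a single orbit. -/
lemma scenario_one (hp : p.Prime) (hq : q.Prime)
    (hmu : muD p q ∈ L) (hnu : nuD p q ∈ L)
    {a : ZMod p} {b : ZMod q} {ε : Bool} (hw : permE p q a b ε true ∈ L) :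
    Nat.card (Quotient (orbitSetoid L)) ≤ 2 := by
  haveI : NeZero p := ⟨hp.pos.ne'⟩
  haveI : NeZero q := ⟨hq.pos.ne'⟩
  have h := card_le_of L (fun _ => (0 : Fin 1)) (fun _ _ _ => rfl) ?_
  · have h1 : Nat.card (Fin 1) = 1 := by simp
    omega
  · intro x y _
    by_cases hd : x.2 = y.2
    · obtain ⟨m, hm⟩ := exists_add_natCast p y.1.1 x.1.1
      obtain ⟨n, hn⟩ := exists_add_natCast q y.1.2 x.1.2
      have hgx : (muD p q ^ m * nuD p q ^ n) y = x := by
        rw [Equiv.Perm.mul_apply, nuD_pow_apply, muD_pow_apply]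
        exact Prod.ext (Prod.ext hm hn) hd.symm
      rw [← hgx]
      exact orbitRel_of (mul_mem (pow_mem hmu m) (pow_mem hnu n)) y
    · set u := permE p q a b ε true y with hu
      have hu2 : u.2 = y.2 + 1 := by rw [hu, permE_apply_snd]; simp
      obtain ⟨m, hm⟩ := exists_add_natCast p u.1.1 x.1.1
      obtain ⟨n, hn⟩ := exists_add_natCast q u.1.2 x.1.2
      have hgx : (muD p q ^ m * (nuD p q ^ n * permE p q a b ε true)) y = x := by
        rw [Equiv.Perm.mul_apply, Equiv.Perm.mul_apply, ← hu, nuD_pow_apply, muD_pow_apply]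
        refine Prod.ext (Prod.ext hm hn) ?_
        rw [hu2]
        exact (zmod2_flip (Ne.symm hd)).symm
      rw [← hgx]
      exact orbitRel_of (mul_mem (pow_mem hmu m) (mul_mem (pow_mem hnu n) hw)) y

end Scenarios

section ClosureParts

variable {p q : ℕ}

/-- Permutations fixing the second coordinate and the `δ`-coordinate. -/
def fixJD (p q : ℕ) : Subgroup (Equiv.Perm ((ZMod p × ZMod q) × ZMod 2)) where
  carrier := {g | ∀ x, (g x).1.2 = x.1.2 ∧ (g x).2 = x.2}
  one_mem' := fun _ => ⟨rfl, rfl⟩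
  mul_mem' := by
    intro g h hg hh x
    rw [Equiv.Perm.mul_apply]
    obtain ⟨h1, h2⟩ := hh x
    obtain ⟨h3, h4⟩ := hg (h x)
    exact ⟨h3.trans h1, h4.trans h2⟩
  inv_mem' := by
    intro g hg x
    obtain ⟨h1, h2⟩ := hg (g⁻¹ x)
    rw [show g (g⁻¹ x) = x from g.apply_symm_apply x] at h1 h2
    exact ⟨h1.symm, h2.symm⟩

/-- Permutations fixing the first coordinate and the `δ`-coordinate. -/
def fixID (p q : ℕ) : Subgroup (Equiv.Perm ((ZMod p × ZMod q) × ZMod 2)) where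
  carrier := {g | ∀ x, (g x).1.1 = x.1.1 ∧ (g x).2 = x.2}
  one_mem' := fun _ => ⟨rfl, rfl⟩
  mul_mem' := by
    intro g h hg hh x
    rw [Equiv.Perm.mul_apply]
    obtain ⟨h1, h2⟩ := hh x
    obtain ⟨h3, h4⟩ := hg (h x)
    exact ⟨h3.trans h1, h4.trans h2⟩
  inv_mem' := by
    intro g hg x
    obtain ⟨h1, h2⟩ := hg (g⁻¹ x)
    rw [show g (g⁻¹ x) = x from g.apply_symm_apply x] at h1 h2
    exact ⟨h1.symm, h2.symm⟩

lemma muD_mem_fixJD : muD p q ∈ fixJD p q := by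
  intro x
  rw [muD_eq, permE_apply]
  exact ⟨by simp, by simp⟩

lemma nuD_mem_fixID : nuD p q ∈ fixID p q := by
  intro x
  rw [nuD_eq, permE_apply]
  exact ⟨by simp, by simp⟩

lemma closure_mu_le_fixJD : Subgroup.closure {muD p q} ≤ fixJD p q :=
  (Subgroup.closure_le _).mpr (Set.singleton_subset_iff.mpr muD_mem_fixJD)

lemma closure_nu_le_fixID : Subgroup.closure {nuD p q} ≤ fixID p q :=
  (Subgroup.closure_le _).mpr (Set.singleton_subset_iff.mpr nuD_mem_fixID)

lemma id_mu_inv : (muD p q)⁻¹ = permE p q (-1) 0 true false := by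
  rw [muD_eq, permE_inv]
  norm_num

lemma id_nu_inv : (nuD p q)⁻¹ = permE p q 0 (-1) true false := by
  rw [nuD_eq, permE_inv]
  norm_num

lemma id_conj_mu_t (a : ZMod p) (b : ZMod q) (c : Bool) :
    permE p q a b true c * muD p q * (permE p q a b true c)⁻¹ = muD p q := by
  rw [muD_eq]
  simp only [permE_inv, permE_mul]
  cases c <;> norm_num

lemma id_conj_mu_f (a : ZMod p) (b : ZMod q) (c : Bool) :
    permE p q a b false c * muD p q * (permE p q a b false c)⁻¹ = (muD p q)⁻¹ := by
  rw [muD_eq]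
  simp only [permE_inv, permE_mul]
  cases c <;> norm_num

lemma id_conj_nu_t (a : ZMod p) (b : ZMod q) (ε : Bool) :
    permE p q a b ε (!ε) * nuD p q * (permE p q a b ε (!ε))⁻¹ = nuD p q := by
  rw [nuD_eq]
  simp only [permE_inv, permE_mul]
  cases ε <;> norm_num

lemma id_conj_nu_f (a : ZMod p) (b : ZMod q) (ε : Bool) :
    permE p q a b ε ε * nuD p q * (permE p q a b ε ε)⁻¹ = (nuD p q)⁻¹ := by
  rw [nuD_eq]
  simp only [permE_inv, permE_mul]
  cases ε <;> norm_num

lemma muD_ne_one (hp : p.Prime) : muD p q ≠ 1 := by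
  haveI : Fact (1 < p) := ⟨hp.one_lt⟩
  intro h
  have h1 : (muD p q (((0 : ZMod p), (0 : ZMod q)), (0 : ZMod 2))).1.1 = 0 := by rw [h]; rfl
  rw [muD_eq, permE_apply] at h1
  simp at h1

lemma nuD_ne_one (hq : q.Prime) : nuD p q ≠ 1 := by
  haveI : Fact (1 < q) := ⟨hq.one_lt⟩
  intro h
  have h1 : (nuD p q (((0 : ZMod p), (0 : ZMod q)), (0 : ZMod 2))).1.2 = 0 := by rw [h]; rfl
  rw [nuD_eq, permE_apply] at h1
  simp at h1

lemma closure_mu_normalIn : NormalIn (Subgroup.closure {muD p q}) (G2group p q) := by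
  constructor
  · exact (Subgroup.closure_le _).mpr (Set.singleton_subset_iff.mpr muD_mem)
  · intro h hh n hn
    obtain ⟨a, b, ε, c, rfl⟩ := mem_G2_form hh
    obtain ⟨k, rfl⟩ := Subgroup.mem_closure_singleton.mp hn
    have key : permE p q a b ε c * muD p q ^ k * (permE p q a b ε c)⁻¹ =
        (permE p q a b ε c * muD p q * (permE p q a b ε c)⁻¹) ^ k := by
      simpa using (map_zpow (MulAut.conj (permE p q a b ε c)) (muD p q) k).symm
    rw [key]
    cases ε
    · rw [id_conj_mu_f]
      exact zpow_mem (inv_mem (Subgroup.subset_closure (Set.mem_singleton _))) k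
    · rw [id_conj_mu_t]
      exact zpow_mem (Subgroup.subset_closure (Set.mem_singleton _)) k

lemma closure_mu_ne_bot (hp : p.Prime) : Subgroup.closure {muD p q} ≠ ⊥ := by
  intro hb
  have hm : muD p q ∈ (⊥ : Subgroup (Equiv.Perm ((ZMod p × ZMod q) × ZMod 2))) :=
    hb ▸ Subgroup.subset_closure (Set.mem_singleton _)
  exact muD_ne_one hp (Subgroup.mem_bot.mp hm)

end ClosureParts

/-- for odd primes `p`, `q`, every normal quotient of `(Γ₂(p,q), G₂(p,q))` by a
nontrivial normal subgroup is degenerate, the quotient by `⟨μ⟩` is `C_{2q}`, the quotient by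
`⟨ν⟩` is `C_{2p}`, and the pair is basic of cycle type. -/
theorem stmt9 (p q : ℕ) (hp : p.Prime) (hpo : Odd p) (hq : q.Prime) (hqo : Odd q) :
    (∀ L : Subgroup (Equiv.Perm ((ZMod p × ZMod q) × ZMod 2)),
      NormalIn L (G2group p q) → L ≠ ⊥ →
      Nat.card (Quotient (orbitSetoid L)) ≤ 2 ∨ IsoCycle (quotientGraph (Gamma2 p q) L)) ∧
    Nonempty (quotientGraph (Gamma2 p q) (Subgroup.closure {muD p q}) ≃g
      SimpleGraph.cycleGraph (2 * q)) ∧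
    Nonempty (quotientGraph (Gamma2 p q) (Subgroup.closure {nuD p q}) ≃g
      SimpleGraph.cycleGraph (2 * p)) ∧
    BasicOfCycleType (Gamma2 p q) (G2group p q) := by
  haveI : Fact p.Prime := ⟨hp⟩
  haveI : Fact q.Prime := ⟨hq⟩
  have hp3 : 3 ≤ p := by
    have h2 := hp.two_le
    have : p ≠ 2 := by rintro rfl; exact (by decide : ¬ Odd 2) hpo
    omega
  have hq3 : 3 ≤ q := by
    have h2 := hq.two_le
    have : q ≠ 2 := by rintro rfl; exact (by decide : ¬ Odd 2) hqo
    omega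
  -- Part (a): every nontrivial normal quotient is degenerate
  have partA : ∀ L : Subgroup (Equiv.Perm ((ZMod p × ZMod q) × ZMod 2)),
      NormalIn L (G2group p q) → L ≠ ⊥ →
      Nat.card (Quotient (orbitSetoid L)) ≤ 2 ∨
        IsoCycle (quotientGraph (Gamma2 p q) L) := by
    intro L hL hbot
    have hform : ∀ x ∈ L, ∃ a b ε c, x = permE p q a b ε c :=
      fun x hx => mem_G2_form (hL.1 hx)
    by_cases hmu : muD p q ∈ L <;> by_cases hnu : nuD p q ∈ L
    · -- μ, ν ∈ L
      by_cases hPd : ∃ (a : ZMod p) (b : ZMod q) (ε : Bool), permE p q a b ε true ∈ L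
      · obtain ⟨a, b, ε, hw⟩ := hPd
        exact Or.inl (scenario_one hp hq hmu hnu hw)
      · refine Or.inl (scenario_two hp hq hmu hnu ?_)
        intro g hg x
        obtain ⟨a, b, ε, c, rfl⟩ := hform g hg
        cases c
        · rw [permE_apply_snd]; simp
        · exact absurd ⟨a, b, ε, hg⟩ hPd
    · -- μ ∈ L, ν ∉ L
      have hshape : ∀ x ∈ L, ∃ a : ZMod p,
          x = permE p q a 0 true false ∨ x = permE p q a 0 false true := by
        intro x hx
        obtain ⟨a, b, ε, c, rfl⟩ := hform x hx
        cases ε <;> cases c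
        · exact absurd (d_tau hp hpo hq hqo hL hx).2 hnu
        · have hb : b = 0 := by
            by_contra hb
            exact hnu ((d_sigtau hp hpo hq hqo hL hx).2 hb)
          exact ⟨a, Or.inr (by rw [hb])⟩
        · have hb : b = 0 := by
            by_contra hb
            exact hnu ((d_translation hp hpo hq hqo hL hx).2 hb)
          exact ⟨a, Or.inl (by rw [hb])⟩
        · exact absurd (d_sigma hp hpo hq hqo hL hx).1 hnu
      by_cases hPst : ∃ a : ZMod p, permE p q a 0 false true ∈ L
      · obtain ⟨w, hw⟩ := hPst
        refine Or.inr ⟨q, hq3, scenario_cq hp hpo hq hqo hmu hw ?_⟩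
        intro g hg x
        obtain ⟨a, ho⟩ := hshape g hg
        rcases ho with rfl | rfl <;> rw [permE_apply] <;> simp
      · refine Or.inr ⟨2 * q, by omega, scenario_c2q hp hpo hq hqo hmu ?_⟩
        intro g hg x
        obtain ⟨a, ho⟩ := hshape g hg
        rcases ho with rfl | rfl
        · rw [permE_apply]; exact ⟨by simp, by simp⟩
        · exact absurd ⟨a, hg⟩ hPst
    · -- ν ∈ L, μ ∉ L
      have hshape : ∀ x ∈ L, ∃ b : ZMod q,
          x = permE p q 0 b true false ∨ x = permE p q 0 b true true := by
        intro x hx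
        obtain ⟨a, b, ε, c, rfl⟩ := hform x hx
        cases ε <;> cases c
        · exact absurd (d_tau hp hpo hq hqo hL hx).1 hmu
        · exact absurd (d_sigtau hp hpo hq hqo hL hx).1 hmu
        · have ha : a = 0 := by
            by_contra ha
            exact hmu ((d_translation hp hpo hq hqo hL hx).1 ha)
          exact ⟨b, Or.inl (by rw [ha])⟩
        · have ha : a = 0 := by
            by_contra ha
            exact hmu ((d_sigma hp hpo hq hqo hL hx).2 ha)
          exact ⟨b, Or.inr (by rw [ha])⟩
      by_cases hPs : ∃ b : ZMod q, permE p q 0 b true true ∈ L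
      · obtain ⟨w, hw⟩ := hPs
        refine Or.inr ⟨p, hp3, scenario_cp hp hpo hq hqo hnu hw ?_⟩
        intro g hg x
        obtain ⟨b, ho⟩ := hshape g hg
        rcases ho with rfl | rfl <;> rw [permE_apply] <;> simp
      · refine Or.inr ⟨2 * p, by omega, scenario_c2p hp hpo hq hqo hnu ?_⟩
        intro g hg x
        obtain ⟨b, ho⟩ := hshape g hg
        rcases ho with rfl | rfl
        · rw [permE_apply]; exact ⟨by simp, by simp⟩
        · exact absurd ⟨b, hg⟩ hPs
    · -- μ ∉ L, ν ∉ L : impossible for L ≠ ⊥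
      exfalso
      obtain ⟨g, hgL, hg1⟩ : ∃ g ∈ L, g ≠ 1 := by
        by_contra hcon
        push_neg at hcon
        exact hbot ((Subgroup.eq_bot_iff_forall L).mpr hcon)
      obtain ⟨a, b, ε, c, rfl⟩ := hform g hgL
      cases ε <;> cases c
      · exact hmu (d_tau hp hpo hq hqo hL hgL).1
      · exact hmu (d_sigtau hp hpo hq hqo hL hgL).1
      · rcases eq_or_ne a 0 with rfl | ha
        · rcases eq_or_ne b 0 with rfl | hb
          · exact hg1 permE_one
          · exact hnu ((d_translation hp hpo hq hqo hL hgL).2 hb)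
        · exact hmu ((d_translation hp hpo hq hqo hL hgL).1 ha)
      · exact hnu (d_sigma hp hpo hq hqo hL hgL).1
  -- Part (b): quotient by ⟨μ⟩ is C_{2q}
  have partB : Nonempty (quotientGraph (Gamma2 p q) (Subgroup.closure {muD p q}) ≃g
      SimpleGraph.cycleGraph (2 * q)) := by
    apply scenario_c2q hp hpo hq hqo (Subgroup.subset_closure (Set.mem_singleton _))
    intro g hg x
    exact closure_mu_le_fixJD hg x
  -- Part (c): quotient by ⟨ν⟩ is C_{2p}
  have partC : Nonempty (quotientGraph (Gamma2 p q) (Subgroup.closure {nuD p q}) ≃g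
      SimpleGraph.cycleGraph (2 * p)) := by
    apply scenario_c2p hp hpo hq hqo (Subgroup.subset_closure (Set.mem_singleton _))
    intro g hg x
    exact closure_nu_le_fixID hg x
  refine ⟨partA, partB, partC, partA, ?_⟩
  exact ⟨Subgroup.closure {muD p q}, closure_mu_normalIn, closure_mu_ne_bot hp,
    2 * q, by omega, partB⟩

end OG4
end
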